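/- arXiv:1408.2389 — 11 statements merged into one kernel-verified Lean document; each statement's English description precedes it below -/
import Mathlib

section
/- Let N be a norm on ℂᵐ with open unit ball B = {z : N(z) < 1}. Then the set of continuous linear functionals {Df(0) : f holomorphic on B with |f| < 1 on B and f(0) = 0} equals the closed unit ball of the dual norm, i.e. the set {ℓ : ℂᵐ → ℂ linear : |ℓ(v)| ≤ N(v) for all v ∈ ℂᵐ}. -/
/-- For a norm `N` on `ℂᵐ` with open unit ball `B = {z : N z < 1}`, the set of
derivatives at `0` of holomorphic maps `f : B → 𝔻` with `f 0 = 0` is exactly the closed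
unit ball of the dual norm. -/
theorem stmt5 {m : ℕ} (N : (Fin m → ℂ) → ℝ)
    (hN0 : ∀ z, N z = 0 ↔ z = 0)
    (hNsmul : ∀ (a : ℂ) (z : Fin m → ℂ), N (a • z) = ‖a‖ * N z)
    (hNadd : ∀ z w, N (z + w) ≤ N z + N w) :
    {ℓ : (Fin m → ℂ) →L[ℂ] ℂ |
        ∃ f : (Fin m → ℂ) → ℂ,
          DifferentiableOn ℂ f {z | N z < 1} ∧
          (∀ z, N z < 1 → ‖f z‖ < 1) ∧ f 0 = 0 ∧ HasFDerivAt f ℓ 0}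
      = {ℓ : (Fin m → ℂ) →L[ℂ] ℂ | ∀ v, ‖ℓ v‖ ≤ N v} := by
  have hNnonneg : ∀ z, 0 ≤ N z := by
    intro z
    have h0 : N 0 = 0 := (hN0 0).mpr rfl
    have := hNadd z (-z)
    have hneg : N (-z) = N z := by
      have := hNsmul (-1) z
      simpa using this
    rw [(by simp : z + -z = (0 : Fin m → ℂ)), h0, hneg] at this
    linarith
  ext ℓ
  simp only [Set.mem_setOf_eq]
  constructor
  · rintro ⟨f, hdiff, hlt, hf0, hderiv⟩ v
    rcases eq_or_ne v 0 with rfl | hv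
    · simp [hNnonneg 0]
    · have hNv : 0 < N v := lt_of_le_of_ne (hNnonneg v) (fun h => hv ((hN0 v).mp h.symm))
      set u : Fin m → ℂ := ((N v : ℂ)⁻¹) • v with hu
      set h : ℂ → Fin m → ℂ := fun w => w • u with hh
      have hNu : ∀ w : ℂ, N (h w) = ‖w‖ := by
        intro w
        rw [hh]
        simp only
        rw [hu, smul_smul, hNsmul]
        have : ‖w * (N v : ℂ)⁻¹‖ = ‖w‖ * (N v)⁻¹ := by
          rw [norm_mul]
          congr 1
          rw [norm_inv, Complex.norm_real, Real.norm_of_nonneg (hNnonneg v)]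
        rw [this]
        field_simp
      -- g = f ∘ h
      have hmaps : Set.MapsTo h (Metric.ball (0:ℂ) 1) {z | N z < 1} := by
        intro w hw
        simp only [Set.mem_setOf_eq, hNu w]
        simpa using hw
      have hdiffh : Differentiable ℂ h := by
        apply Differentiable.smul_const differentiable_id
      have hgdiff : DifferentiableOn ℂ (f ∘ h) (Metric.ball (0:ℂ) 1) :=
        hdiff.comp (hdiffh.differentiableOn) hmaps
      have hh0 : h 0 = 0 := by simp [hh]
      have hDh : HasDerivAt h u 0 := by
        simpa using (hasDerivAt_id (0:ℂ)).smul_const u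
      have hDg : HasDerivAt (f ∘ h) (ℓ u) 0 := by
        have hderiv' : HasFDerivAt f ℓ (h 0) := by rwa [hh0]
        simpa using hderiv'.comp_hasDerivAt 0 hDh
      have hmaps2 : Set.MapsTo (f ∘ h) (Metric.ball (0:ℂ) 1)
          (Metric.ball ((f ∘ h) 0) 1) := by
        intro w hw
        simp only [Function.comp_apply, hh0, hf0, Metric.mem_ball, dist_zero_right]
        exact hlt (h w) (hmaps hw)
      have hSch := Complex.norm_deriv_le_div_of_mapsTo_ball hgdiff (hmaps2.mono_right Metric.ball_subset_closedBall) one_pos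
      rw [hDg.deriv] at hSch
      have : ℓ u = (N v : ℂ)⁻¹ * ℓ v := by
        rw [hu, map_smul]; simp [smul_eq_mul]
      rw [this] at hSch
      rw [norm_mul, norm_inv, Complex.norm_real, Real.norm_of_nonneg (hNnonneg v)] at hSch
      have h1 : (1:ℝ)/1 = 1 := by norm_num
      rw [h1] at hSch
      calc ‖ℓ v‖ = N v * ((N v)⁻¹ * ‖ℓ v‖) := by field_simp
        _ ≤ N v * 1 := by
            apply mul_le_mul_of_nonneg_left hSch (hNnonneg v)
        _ = N v := mul_one _
  · intro hle
    refine ⟨fun z => ℓ z, ℓ.differentiable.differentiableOn, ?_, by simp, ℓ.hasFDerivAt⟩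
    intro z hz
    exact lt_of_le_of_lt (hle z) hz
end

section
/- For α, β ∈ ℂ, the supremum of |αx + βy| over all (x,y) ∈ ℂ² with |x|² + |y| ≤ 1 equals (|α|² + 4|β|²)/(4|β|) if β ≠ 0 and |α| ≤ 2|β|, and equals |α| otherwise. (This computes the norm dual to the norm on ℂ² whose unit ball is {(x,y) : |x|² + |y| < 1}.) -/
lemma unit_dir (α : ℂ) : ∃ u : ℂ, ‖u‖ = 1 ∧ α * u = (‖α‖ : ℂ) := by
  rcases eq_or_ne α 0 with h | h
  · exact ⟨1, norm_one, by simp [h]⟩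
  · refine ⟨star α / (‖α‖ : ℂ), ?_, ?_⟩
    · simp [norm_div, h]
    · rw [mul_div_assoc', Complex.star_def, Complex.mul_conj']
      rw [div_eq_iff (by exact_mod_cast norm_ne_zero_iff.2 h)]
      ring

lemma exists_pt (α β : ℂ) (t s : ℝ) (ht : 0 ≤ t) (hs : 0 ≤ s) :
    ∃ x y : ℂ, ‖x‖ = t ∧ ‖y‖ = s ∧ ‖α * x + β * y‖ = ‖α‖ * t + ‖β‖ * s := by
  obtain ⟨u, hu, hau⟩ := unit_dir α
  obtain ⟨v, hv, hbv⟩ := unit_dir β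
  refine ⟨(t : ℂ) * u, (s : ℂ) * v, ?_, ?_, ?_⟩
  · simp [norm_mul, hu, abs_of_nonneg ht]
  · simp [norm_mul, hv, abs_of_nonneg hs]
  · have : α * ((t : ℂ) * u) + β * ((s : ℂ) * v) = ((‖α‖ * t + ‖β‖ * s : ℝ) : ℂ) := by
      have h1 : α * ((t : ℂ) * u) = (t : ℂ) * (α * u) := by ring
      have h2 : β * ((s : ℂ) * v) = (s : ℂ) * (β * v) := by ring
      rw [h1, h2, hau, hbv]; push_cast; ring
    rw [this, Complex.norm_real, Real.norm_eq_abs, abs_of_nonneg]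
    positivity

lemma ub (α β : ℂ) (M : ℝ)
    (hM : ∀ t : ℝ, 0 ≤ t → t ≤ 1 → ‖α‖ * t + ‖β‖ * (1 - t ^ 2) ≤ M) :
    ∀ r ∈ {r : ℝ | ∃ x y : ℂ, ‖x‖ ^ 2 + ‖y‖ ≤ 1 ∧ r = ‖α * x + β * y‖}, r ≤ M := by
  rintro r ⟨x, y, hxy, rfl⟩
  have h1 : ‖α * x + β * y‖ ≤ ‖α‖ * ‖x‖ + ‖β‖ * ‖y‖ := by
    calc ‖α * x + β * y‖ ≤ ‖α * x‖ + ‖β * y‖ := norm_add_le _ _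
      _ = ‖α‖ * ‖x‖ + ‖β‖ * ‖y‖ := by simp [norm_mul]
  have ht1 : ‖x‖ ≤ 1 := by nlinarith [norm_nonneg x, norm_nonneg y]
  have hy : ‖y‖ ≤ 1 - ‖x‖ ^ 2 := by linarith
  have := hM ‖x‖ (norm_nonneg x) ht1
  nlinarith [norm_nonneg β, mul_le_mul_of_nonneg_left hy (norm_nonneg β)]

/-- The dual norm of the linear functional `(x,y) ↦ αx + βy` with respect to the norm on
`ℂ²` whose closed unit ball is `{(x,y) : |x|² + |y| ≤ 1}`: the supremum of `|αx + βy|`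
over that ball equals `(|α|² + 4|β|²)/(4|β|)` when `β ≠ 0` and `|α| ≤ 2|β|`, and equals
`|α|` otherwise. -/
theorem stmt6 (α β : ℂ) :
    ((β ≠ 0 ∧ ‖α‖ ≤ 2 * ‖β‖) →
      sSup {r : ℝ | ∃ x y : ℂ, ‖x‖ ^ 2 + ‖y‖ ≤ 1 ∧ r = ‖α * x + β * y‖}
        = (‖α‖ ^ 2 + 4 * ‖β‖ ^ 2) / (4 * ‖β‖)) ∧
    (¬(β ≠ 0 ∧ ‖α‖ ≤ 2 * ‖β‖) →
      sSup {r : ℝ | ∃ x y : ℂ, ‖x‖ ^ 2 + ‖y‖ ≤ 1 ∧ r = ‖α * x + β * y‖}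
        = ‖α‖) := by
  set a := ‖α‖ with ha
  set b := ‖β‖ with hb
  constructor
  · rintro ⟨hβ, hab⟩
    have hb0 : 0 < b := norm_pos_iff.2 hβ
    have ha0 : 0 ≤ a := norm_nonneg α
    set t : ℝ := a / (2 * b) with htdef
    have ht : 0 ≤ t := by positivity
    have ht1 : t ≤ 1 := by rw [htdef, div_le_one (by positivity)]; linarith
    have hs : 0 ≤ 1 - t ^ 2 := by nlinarith
    obtain ⟨x, y, hx, hy, hval⟩ := exists_pt α β t (1 - t ^ 2) ht hs
    have hmem : (a ^ 2 + 4 * b ^ 2) / (4 * b) ∈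
        {r : ℝ | ∃ x y : ℂ, ‖x‖ ^ 2 + ‖y‖ ≤ 1 ∧ r = ‖α * x + β * y‖} := by
      refine ⟨x, y, by rw [hx, hy]; ring_nf; linarith, ?_⟩
      have heq : ‖α‖ * t + ‖β‖ * (1 - t ^ 2) = (a ^ 2 + 4 * b ^ 2) / (4 * b) := by
        rw [← ha, ← hb, htdef]
        field_simp
        ring
      rw [hval, heq]
    have hub : ∀ r ∈ {r : ℝ | ∃ x y : ℂ, ‖x‖ ^ 2 + ‖y‖ ≤ 1 ∧ r = ‖α * x + β * y‖},
        r ≤ (a ^ 2 + 4 * b ^ 2) / (4 * b) := by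
      apply ub
      intro u hu hu1
      rw [le_div_iff₀ (by positivity)]
      nlinarith [sq_nonneg (a - 2 * b * u)]
    exact le_antisymm (csSup_le ⟨_, hmem⟩ hub) (le_csSup ⟨_, hub⟩ hmem)
  · intro h
    have hcase : b = 0 ∨ 2 * b < a := by
      by_cases hβ : β = 0
      · exact Or.inl (by rw [hb, hβ, norm_zero])
      · push_neg at h; exact Or.inr (h hβ)
    have ha0 : 0 ≤ a := norm_nonneg α
    have hb0 : 0 ≤ b := norm_nonneg β
    obtain ⟨x, y, hx, hy, hval⟩ := exists_pt α β 1 0 zero_le_one le_rfl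
    have hmem : a ∈ {r : ℝ | ∃ x y : ℂ, ‖x‖ ^ 2 + ‖y‖ ≤ 1 ∧ r = ‖α * x + β * y‖} := by
      refine ⟨x, y, by rw [hx, hy]; norm_num, ?_⟩
      rw [hval]; ring
    have hub : ∀ r ∈ {r : ℝ | ∃ x y : ℂ, ‖x‖ ^ 2 + ‖y‖ ≤ 1 ∧ r = ‖α * x + β * y‖},
        r ≤ a := by
      apply ub
      intro u hu hu1
      rw [← ha, ← hb]
      rcases hcase with hc | hc
      · rw [hc]; nlinarith
      · nlinarith [mul_nonneg (by linarith : (0:ℝ) ≤ 1 - u)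
          (by nlinarith : (0:ℝ) ≤ a - b - b * u)]
    exact le_antisymm (csSup_le ⟨_, hmem⟩ hub) (le_csSup ⟨_, hub⟩ hmem)
end

section
/- Let v₁ = (v₁₁, v₁₂), v₂ = (v₂₁, v₂₂) ∈ ℂ², and let S be the 2×4 complex matrix with first row (v₁₁, v₁₂, v₂₁, v₂₂) and second row (0, 0, v₁₁, v₁₂) (that is, S = I₂ ⊗ v₁ + E₁₂ ⊗ v₂, where E₁₂ is the 2×2 matrix unit with 1 in position (1,2)). Then ‖S‖_op² equals the operator norm of the 2×2 Hermitian matrix [[‖v₁‖² + ‖v₂‖², ⟨v₂, v₁⟩],[⟨v₁, v₂⟩, ‖v₁‖²]], which equals (2‖v₁‖² + ‖v₂‖² + √(‖v₂‖⁴ + 4|⟨v₁,v₂⟩|²))/2. -/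
open scoped Kronecker

/-- The operator norm of a complex matrix, viewed as a linear map between
Euclidean spaces (standard `ℓ²` norms). -/
noncomputable def opNorm {m n : Type*} [Fintype m] [Fintype n] [DecidableEq n]
    (M : Matrix m n ℂ) : ℝ :=
  ‖LinearMap.toContinuousLinearMap (Matrix.toEuclideanLin M)‖

open scoped Matrix.Norms.L2Operator
open Matrix

lemma opNorm_eq_l2norm {m n : Type*} [Fintype m] [Fintype n] [DecidableEq n]
    (M : Matrix m n ℂ) : opNorm M = ‖M‖ := rfl

set_option maxHeartbeats 1000000 in
lemma herm2_opNorm (p r lam : ℝ) (q : ℂ)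
    (hlam0 : 0 ≤ lam) (htr : 0 ≤ p + r)
    (hq : ‖q‖ ^ 2 = (lam - p) * (lam - r))
    (hlp : p ≤ lam) (hlr : r ≤ lam) :
    opNorm !![(p : ℂ), q; (starRingEnd ℂ) q, (r : ℂ)] = lam := by
  have ha : 0 ≤ lam - p := by linarith
  have hb : 0 ≤ lam - r := by linarith
  set M : Matrix (Fin 2) (Fin 2) ℂ := !![(p : ℂ), q; (starRingEnd ℂ) q, (r : ℂ)] with hM
  have expand : ∀ z : ℂ, ‖z‖ ^ 2 = z.re ^ 2 + z.im ^ 2 := by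
    intro z
    rw [Complex.sq_norm, Complex.normSq_apply]; ring
  -- the central real inequality
  have main : ∀ n1 n2 u : ℝ, 0 ≤ n1 → 0 ≤ n2 → u ^ 2 ≤ ((lam-p)*(lam-r))*(n1*n2) →
      p^2*n1 + ((lam-p)*(lam-r))*n2 + 2*p*u
        + (((lam-p)*(lam-r))*n1 + r^2*n2 + 2*r*u) ≤ lam^2*(n1+n2) := by
    intro n1 n2 u hn1 hn2 hu
    have key : 2*u ≤ (lam-p)*n1 + (lam-r)*n2 := by
      rcases le_or_gt u 0 with h | h
      · nlinarith [mul_nonneg ha hn1, mul_nonneg hb hn2]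
      · by_contra hcon
        push_neg at hcon
        have hX : 0 ≤ (lam-p)*n1 + (lam-r)*n2 := by
          have := mul_nonneg ha hn1; have := mul_nonneg hb hn2; linarith
        have h1 : ((lam-p)*n1 + (lam-r)*n2) * ((lam-p)*n1 + (lam-r)*n2)
            ≤ (2*u) * ((lam-p)*n1 + (lam-r)*n2) :=
          mul_le_mul_of_nonneg_right hcon.le hX
        have h2 : (2*u) * ((lam-p)*n1 + (lam-r)*n2) < (2*u) * (2*u) :=
          mul_lt_mul_of_pos_left hcon (by linarith)
        nlinarith [sq_nonneg ((lam-p)*n1 - (lam-r)*n2)]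
    nlinarith [mul_le_mul_of_nonneg_left key htr]
  have hupper : opNorm M ≤ lam := by
    apply ContinuousLinearMap.opNorm_le_bound _ hlam0
    intro x
    set A : ℂ := x 0 with hA
    set B : ℂ := x 1 with hB
    have hx : ‖x‖ ^ 2 = ‖A‖ ^ 2 + ‖B‖ ^ 2 := by
      rw [EuclideanSpace.norm_eq,
        Real.sq_sqrt (Finset.sum_nonneg fun i _ => sq_nonneg ‖x i‖), Fin.sum_univ_two]
    have hfx : (LinearMap.toContinuousLinearMap (Matrix.toEuclideanLin M)) x
        = (WithLp.equiv 2 (Fin 2 → ℂ)).symm ![(p:ℂ) * A + q * B, (starRingEnd ℂ) q * A + (r:ℂ) * B] := by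
      simp only [LinearMap.coe_toContinuousLinearMap', toEuclideanLin_apply]
      congr 1
      funext i
      fin_cases i <;>
        simp [hM, Matrix.mulVec, dotProduct, Fin.sum_univ_two, hA, hB, Matrix.vecHead, Matrix.vecTail]
    have hfn : ‖(LinearMap.toContinuousLinearMap (Matrix.toEuclideanLin M)) x‖ ^ 2
        = ‖(p:ℂ) * A + q * B‖ ^ 2 + ‖(starRingEnd ℂ) q * A + (r:ℂ) * B‖ ^ 2 := by
      rw [hfx, EuclideanSpace.norm_eq,
        Real.sq_sqrt (Finset.sum_nonneg fun i _ => sq_nonneg _), Fin.sum_univ_two]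
      simp
    set u : ℝ := (q * B * (starRingEnd ℂ) A).re with hu
    have h1 : ‖(p:ℂ) * A + q * B‖ ^ 2 = p^2*‖A‖^2 + ‖q‖^2*‖B‖^2 + 2*p*u := by
      simp only [expand, hu, Complex.add_re, Complex.add_im, Complex.mul_re, Complex.mul_im,
        Complex.ofReal_re, Complex.ofReal_im, Complex.conj_re, Complex.conj_im]
      ring
    have h2 : ‖(starRingEnd ℂ) q * A + (r:ℂ) * B‖ ^ 2 = ‖q‖^2*‖A‖^2 + r^2*‖B‖^2 + 2*r*u := by
      simp only [expand, hu, Complex.add_re, Complex.add_im, Complex.mul_re, Complex.mul_im,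
        Complex.ofReal_re, Complex.ofReal_im, Complex.conj_re, Complex.conj_im]
      ring
    have huu : u ^ 2 ≤ ((lam-p)*(lam-r)) * (‖A‖^2 * ‖B‖^2) := by
      have h3 : |u| ≤ ‖q * B * (starRingEnd ℂ) A‖ := Complex.abs_re_le_norm _
      have h4 : ‖q * B * (starRingEnd ℂ) A‖ ^ 2 = ‖q‖^2 * (‖B‖^2 * ‖A‖^2) := by
        simp [norm_mul]; ring
      rw [← hq]
      have h5 := mul_self_le_mul_self (abs_nonneg u) h3
      rw [abs_mul_abs_self] at h5
      nlinarith [h5, h4]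
    have hineq := main (‖A‖^2) (‖B‖^2) u (sq_nonneg _) (sq_nonneg _) huu
    have : ‖(LinearMap.toContinuousLinearMap (Matrix.toEuclideanLin M)) x‖ ^ 2
        ≤ (lam * ‖x‖) ^ 2 := by
      rw [hfn, h1, h2, hq, mul_pow, hx]
      linarith [hineq]
    nlinarith [norm_nonneg ((LinearMap.toContinuousLinearMap (Matrix.toEuclideanLin M)) x),
      mul_nonneg hlam0 (norm_nonneg x)]
  have hlower : lam ≤ opNorm M := by
    obtain ⟨w1, w2, hw, heig1, heig2⟩ : ∃ w1 w2 : ℂ, ¬(w1 = 0 ∧ w2 = 0) ∧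
        (p:ℂ)*w1 + q*w2 = (lam:ℂ)*w1 ∧ (starRingEnd ℂ) q*w1 + (r:ℂ)*w2 = (lam:ℂ)*w2 := by
      by_cases hc : lam = r ∧ q = 0
      · exact ⟨0, 1, by simp, by simp [hc.2], by simp [hc.1, hc.2]⟩
      · refine ⟨((lam - r : ℝ) : ℂ), (starRingEnd ℂ) q, ?_, ?_, ?_⟩
        · rintro ⟨h1, h2⟩
          exact hc ⟨by exact_mod_cast sub_eq_zero.mp (by exact_mod_cast h1),
            by simpa using congrArg (starRingEnd ℂ) h2⟩
        · have hnq : q * (starRingEnd ℂ) q = (((lam - p)*(lam - r) : ℝ) : ℂ) := by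
            rw [Complex.mul_conj, ← hq]
            norm_cast
            rw [Complex.normSq_eq_norm_sq]
          push_cast
          push_cast at hnq
          linear_combination hnq
        · push_cast; ring
    set w : EuclideanSpace ℂ (Fin 2) := (WithLp.equiv 2 (Fin 2 → ℂ)).symm ![w1, w2] with hwdef
    have hwn2 : ‖w‖ ^ 2 = ‖w1‖^2 + ‖w2‖^2 := by
      rw [EuclideanSpace.norm_eq,
        Real.sq_sqrt (Finset.sum_nonneg fun i _ => sq_nonneg _), Fin.sum_univ_two]
      simp [hwdef]
    have hwpos : 0 < ‖w‖ := by
      have h5 : 0 < ‖w1‖^2 + ‖w2‖^2 := by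
        rcases not_and_or.mp hw with h | h
        · have := norm_pos_iff.mpr h; nlinarith [sq_nonneg ‖w2‖]
        · have := norm_pos_iff.mpr h; nlinarith [sq_nonneg ‖w1‖]
      nlinarith [norm_nonneg w]
    have heig : (LinearMap.toContinuousLinearMap (Matrix.toEuclideanLin M)) w = (lam:ℂ) • w := by
      simp only [LinearMap.coe_toContinuousLinearMap', hwdef,
        WithLp.equiv_symm_apply, toEuclideanLin_apply_piLp_toLp]
      have hmv : M *ᵥ ![w1, w2] = (lam:ℂ) • ![w1, w2] := by
        funext i
        fin_cases i <;>
          simp [hM, Matrix.mulVec, dotProduct, Fin.sum_univ_two, heig1, heig2]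
      rw [hmv]
      rfl
    have hle := (LinearMap.toContinuousLinearMap (Matrix.toEuclideanLin M)).le_opNorm w
    rw [heig, norm_smul] at hle
    have : ‖(lam:ℂ)‖ = lam := by rw [Complex.norm_real, Real.norm_eq_abs, abs_of_nonneg hlam0]
    rw [this] at hle
    exact le_of_mul_le_mul_right (by exact hle) hwpos
  exact le_antisymm hupper hlower

/-- For `S = I₂ ⊗ v₁ + E₁₂ ⊗ v₂`, i.e. the 2×4 matrix with rows `(v₁₁,v₁₂,v₂₁,v₂₂)` and
`(0,0,v₁₁,v₁₂)`, the squared operator norm equals the operator norm of the Hermitian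
matrix `[[‖v₁‖²+‖v₂‖², ⟨v₂,v₁⟩],[⟨v₁,v₂⟩, ‖v₁‖²]]`, which equals
`(2‖v₁‖² + ‖v₂‖² + √(‖v₂‖⁴ + 4|⟨v₁,v₂⟩|²))/2`. -/
theorem stmt8 (v11 v12 v21 v22 : ℂ) :
    opNorm !![v11, v12, v21, v22; 0, 0, v11, v12] ^ 2
        = opNorm !![((‖v11‖ ^ 2 + ‖v12‖ ^ 2 + ‖v21‖ ^ 2 + ‖v22‖ ^ 2 : ℝ) : ℂ),
              v21 * (starRingEnd ℂ) v11 + v22 * (starRingEnd ℂ) v12;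
              v11 * (starRingEnd ℂ) v21 + v12 * (starRingEnd ℂ) v22,
              ((‖v11‖ ^ 2 + ‖v12‖ ^ 2 : ℝ) : ℂ)] ∧
    opNorm !![v11, v12, v21, v22; 0, 0, v11, v12] ^ 2
        = (2 * (‖v11‖ ^ 2 + ‖v12‖ ^ 2) + (‖v21‖ ^ 2 + ‖v22‖ ^ 2)
            + Real.sqrt ((‖v21‖ ^ 2 + ‖v22‖ ^ 2) ^ 2
                + 4 * ‖v11 * (starRingEnd ℂ) v21 + v12 * (starRingEnd ℂ) v22‖ ^ 2)) / 2 := by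
  set S : Matrix (Fin 2) (Fin 4) ℂ := !![v11, v12, v21, v22; 0, 0, v11, v12] with hS
  set H : Matrix (Fin 2) (Fin 2) ℂ :=
    !![((‖v11‖ ^ 2 + ‖v12‖ ^ 2 + ‖v21‖ ^ 2 + ‖v22‖ ^ 2 : ℝ) : ℂ),
        v21 * (starRingEnd ℂ) v11 + v22 * (starRingEnd ℂ) v12;
        v11 * (starRingEnd ℂ) v21 + v12 * (starRingEnd ℂ) v22,
        ((‖v11‖ ^ 2 + ‖v12‖ ^ 2 : ℝ) : ℂ)] with hH
  have hgram : S * Sᴴ = H := by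
    ext i j
    fin_cases i <;> fin_cases j <;>
      simp [hS, hH, Matrix.mul_apply, Fin.sum_univ_four, Matrix.conjTranspose_apply,
        Complex.mul_conj, Complex.normSq_eq_norm_sq] <;>
      push_cast <;> ring
  have key : opNorm S ^ 2 = opNorm H := by
    have h1 : ‖Sᴴᴴ * Sᴴ‖ = ‖Sᴴ‖ * ‖Sᴴ‖ := Matrix.l2_opNorm_conjTranspose_mul_self Sᴴ
    rw [conjTranspose_conjTranspose, hgram, Matrix.l2_opNorm_conjTranspose] at h1
    rw [opNorm_eq_l2norm, opNorm_eq_l2norm, h1]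
    ring
  refine ⟨key, ?_⟩
  -- second part
  set a : ℝ := ‖v11‖ ^ 2 + ‖v12‖ ^ 2 with hadef
  set b : ℝ := ‖v21‖ ^ 2 + ‖v22‖ ^ 2 with hbdef
  set q' : ℂ := v11 * (starRingEnd ℂ) v21 + v12 * (starRingEnd ℂ) v22 with hq'def
  set c : ℝ := ‖q'‖ ^ 2 with hcdef
  set s : ℝ := Real.sqrt (b ^ 2 + 4 * c) with hsdef
  set lam : ℝ := (2 * a + b + s) / 2 with hlamdef
  have ha0 : 0 ≤ a := by rw [hadef]; positivity
  have hb0 : 0 ≤ b := by rw [hbdef]; positivity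
  have hc0 : 0 ≤ c := by rw [hcdef]; positivity
  have hs0 : 0 ≤ s := Real.sqrt_nonneg _
  have hs2 : s ^ 2 = b ^ 2 + 4 * c := Real.sq_sqrt (by nlinarith)
  have hbs : b ≤ s := by nlinarith
  have hqq : H = !![(((a + b : ℝ)) : ℂ), (starRingEnd ℂ) q';
      (starRingEnd ℂ) ((starRingEnd ℂ) q'), ((a : ℝ) : ℂ)] := by
    rw [hH]
    ext i j
    fin_cases i <;> fin_cases j <;>
      simp [hq'def, hadef, hbdef, map_add, _root_.map_mul] <;> push_cast <;> ring
  have hnormq : ‖(starRingEnd ℂ) q'‖ ^ 2 = c := by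
    rw [RCLike.norm_conj]
  have hlam : opNorm H = lam := by
    rw [hqq]
    refine herm2_opNorm (a + b) a lam ((starRingEnd ℂ) q') ?_ ?_ ?_ ?_ ?_
    · rw [hlamdef]; linarith
    · linarith
    · rw [hnormq, hlamdef]
      linear_combination (-1/4 : ℝ) * hs2
    · rw [hlamdef]; linarith
    · rw [hlamdef]; linarith
  rw [key, hlam, hlamdef]
end

section
/- The following two facts hold, exhibiting a contractive homomorphism of the algebra O(Ω_A), A = (I₂, E₁₂), which is not completely contractive: (a) for all (x,y) ∈ ℂ² with |x|² + |y|² ≤ 1, the operator norm of the 2×2 matrix [[x/√2, y],[0, x/√2]] is at most 1; (b) the 2×4 complex matrix with first row (1/√2, 0, 0, 1) and second row (0, 0, 1/√2, 0) has operator norm squared equal to 3/2, which is strictly greater than 1. -/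
open scoped Kronecker

lemma euc_norm_le' {ι κ : Type*} [Fintype ι] [Fintype κ]
    (w : EuclideanSpace ℂ ι) (v : EuclideanSpace ℂ κ) (c : ℝ) (hc : 0 ≤ c)
    (h : ∑ i, ‖w i‖ ^ 2 ≤ c ^ 2 * ∑ j, ‖v j‖ ^ 2) : ‖w‖ ≤ c * ‖v‖ := by
  rw [EuclideanSpace.norm_eq, EuclideanSpace.norm_eq,
    ← Real.sqrt_sq hc, ← Real.sqrt_mul (sq_nonneg c)]
  exact Real.sqrt_le_sqrt h

lemma stmt9_parta (x y : ℂ) (h : ‖x‖ ^ 2 + ‖y‖ ^ 2 ≤ 1) :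
    opNorm !![x / (Real.sqrt 2 : ℂ), y; 0, x / (Real.sqrt 2 : ℂ)] ≤ 1 := by
  have hs : (0:ℝ) < Real.sqrt 2 := Real.sqrt_pos.2 (by norm_num)
  apply ContinuousLinearMap.opNorm_le_bound _ zero_le_one
  intro v
  rw [one_mul]
  have key := euc_norm_le' (Matrix.toEuclideanLin
      !![x / (Real.sqrt 2 : ℂ), y; 0, x / (Real.sqrt 2 : ℂ)] v) v 1 zero_le_one ?_
  · simpa using key
  simp only [Matrix.toEuclideanLin_apply, WithLp.equiv_symm_apply, WithLp.ofLp_toLp, PiLp.toLp_apply,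
    Matrix.mulVec, dotProduct, Fin.sum_univ_two, Matrix.of_apply, Matrix.cons_val', Matrix.cons_val_zero,
    Matrix.cons_val_one, Matrix.head_cons, Matrix.empty_val', Matrix.cons_val_fin_one,
    Matrix.head_fin_const, one_pow, one_mul]
  have ha : ‖x / (Real.sqrt 2 : ℂ)‖ = ‖x‖ / Real.sqrt 2 := by
    rw [norm_div, Complex.norm_real, Real.norm_eq_abs, abs_of_pos hs]
  have ha2 : ‖x / (Real.sqrt 2 : ℂ)‖ ^ 2 = ‖x‖ ^ 2 / 2 := by
    rw [ha, div_pow, Real.sq_sqrt (by norm_num)]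
  set A := ‖x / (Real.sqrt 2 : ℂ)‖ with hA
  have h1 : ‖x / (Real.sqrt 2 : ℂ) * v 0 + y * v 1‖ ≤ A * ‖v 0‖ + ‖y‖ * ‖v 1‖ := by
    calc _ ≤ ‖x / (Real.sqrt 2 : ℂ) * v 0‖ + ‖y * v 1‖ := norm_add_le _ _
    _ = _ := by rw [norm_mul, norm_mul]
  have h1' : ‖x / (Real.sqrt 2 : ℂ) * v 0 + y * v 1‖ ^ 2 ≤ (A * ‖v 0‖ + ‖y‖ * ‖v 1‖) ^ 2 :=
    pow_le_pow_left₀ (norm_nonneg _) h1 2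
  have h2 : ‖0 * v 0 + x / (Real.sqrt 2 : ℂ) * v 1‖ ^ 2 = A ^ 2 * ‖v 1‖ ^ 2 := by
    rw [zero_mul, zero_add, norm_mul, mul_pow]
  rw [h2]
  have hAY : 2 * A ^ 2 + ‖y‖ ^ 2 ≤ 1 := by rw [ha2]; linarith
  nlinarith [sq_nonneg (‖y‖ * ‖v 0‖ - A * ‖v 1‖), sq_nonneg (‖v 0‖), sq_nonneg (‖v 1‖),
    norm_nonneg (v 0), norm_nonneg (v 1), norm_nonneg y, norm_nonneg (x / (Real.sqrt 2 : ℂ)),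
    mul_nonneg (sq_nonneg A) (sq_nonneg (‖v 0‖)), mul_nonneg (sq_nonneg (‖y‖)) (sq_nonneg (‖v 1‖))]

noncomputable abbrev stmt9N : Matrix (Fin 2) (Fin 4) ℂ :=
  !![(1 / (Real.sqrt 2 : ℂ)), 0, 0, 1; 0, 0, (1 / (Real.sqrt 2 : ℂ)), 0]

lemma stmt9_partb : opNorm stmt9N ^ 2 = 3 / 2 := by
  have hs : (0:ℝ) < Real.sqrt 2 := Real.sqrt_pos.2 (by norm_num)
  have hs2 : Real.sqrt 2 ^ 2 = 2 := Real.sq_sqrt (by norm_num)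
  have hc : ‖(1 / (Real.sqrt 2 : ℂ))‖ = 1 / Real.sqrt 2 := by
    rw [norm_div, norm_one, Complex.norm_real, Real.norm_eq_abs, abs_of_pos hs]
  have hr32 : Real.sqrt (3/2) ^ 2 = 3/2 := Real.sq_sqrt (by norm_num)
  have hr32pos : (0:ℝ) < Real.sqrt (3/2) := Real.sqrt_pos.2 (by norm_num)
  have hub : opNorm stmt9N ≤ Real.sqrt (3/2) := by
    apply ContinuousLinearMap.opNorm_le_bound _ hr32pos.le
    intro v
    apply euc_norm_le'
    · exact hr32pos.le
    rw [hr32]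
    simp only [stmt9N, LinearMap.coe_toContinuousLinearMap', Matrix.toEuclideanLin_apply,
      WithLp.equiv_symm_apply, WithLp.ofLp_toLp, PiLp.toLp_apply, Matrix.mulVec, dotProduct,
      Fin.sum_univ_four, Fin.sum_univ_two, Matrix.of_apply, Matrix.cons_val', Matrix.cons_val_zero,
      Matrix.cons_val_one, Matrix.head_cons, Matrix.empty_val', Matrix.cons_val_fin_one,
      Matrix.head_fin_const, Matrix.cons_val_two, Matrix.tail_cons, Matrix.cons_val_three,
      zero_mul, add_zero, zero_add, one_mul]
    have h1 : ‖1 / (Real.sqrt 2 : ℂ) * v 0 + v 3‖ ≤ (1 / Real.sqrt 2) * ‖v 0‖ + ‖v 3‖ := by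
      calc _ ≤ ‖1 / (Real.sqrt 2 : ℂ) * v 0‖ + ‖v 3‖ := norm_add_le _ _
      _ = _ := by rw [norm_mul, hc]
    have h1' := pow_le_pow_left₀ (norm_nonneg _) h1 2
    have h2 : ‖1 / (Real.sqrt 2 : ℂ) * v 2‖ ^ 2 = (1/2) * ‖v 2‖ ^ 2 := by
      rw [norm_mul, mul_pow, hc, div_pow, one_pow, hs2]; try ring
    rw [h2]
    have key : ((1 / Real.sqrt 2) * ‖v 0‖ + ‖v 3‖) ^ 2 ≤ (3/2) * (‖v 0‖^2 + ‖v 3‖^2) := by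
      have hAM := sq_nonneg (‖v 0‖ - (1 / Real.sqrt 2) * ‖v 3‖)
      have h12 : (1 / Real.sqrt 2) ^ 2 = 1/2 := by rw [div_pow, one_pow, hs2]
      nlinarith [norm_nonneg (v 0), norm_nonneg (v 3), hs]
    nlinarith [sq_nonneg (‖v 1‖), sq_nonneg (‖v 2‖), h1', key]
  have hlb : Real.sqrt (3/2) ≤ opNorm stmt9N := by
    set u : EuclideanSpace ℂ (Fin 4) :=
      (WithLp.equiv 2 (Fin 4 → ℂ)).symm ![1 / (Real.sqrt 2 : ℂ), 0, 0, 1] with hu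
    have hnu : ‖u‖ = Real.sqrt (3/2) := by
      rw [EuclideanSpace.norm_eq]
      congr 1
      simp only [hu, WithLp.equiv_symm_apply, WithLp.ofLp_toLp, PiLp.toLp_apply, Fin.sum_univ_four, Matrix.of_apply,
        Matrix.cons_val', Matrix.cons_val_zero, Matrix.cons_val_one, Matrix.head_cons,
        Matrix.empty_val', Matrix.cons_val_fin_one, Matrix.head_fin_const, Matrix.cons_val_two,
        Matrix.tail_cons, Matrix.cons_val_three, norm_zero, norm_one, hc]
      rw [div_pow, one_pow, hs2]
      norm_num
    have hNu : ‖(LinearMap.toContinuousLinearMap (Matrix.toEuclideanLin stmt9N)) u‖ = 3/2 := by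
      have hrfl : (LinearMap.toContinuousLinearMap (Matrix.toEuclideanLin stmt9N)) u =
          (WithLp.equiv 2 (Fin 2 → ℂ)).symm
            (Matrix.mulVec stmt9N ![1 / (Real.sqrt 2 : ℂ), 0, 0, 1]) := rfl
      rw [hrfl, EuclideanSpace.norm_eq]
      simp only [stmt9N, WithLp.equiv_symm_apply, WithLp.ofLp_toLp, PiLp.toLp_apply, Matrix.mulVec, dotProduct,
        Fin.sum_univ_four, Fin.sum_univ_two, Matrix.of_apply, Matrix.cons_val',
        Matrix.cons_val_zero, Matrix.cons_val_one, Matrix.head_cons, Matrix.empty_val',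
        Matrix.cons_val_fin_one, Matrix.head_fin_const, Matrix.cons_val_two, Matrix.tail_cons,
        Matrix.cons_val_three, mul_zero, zero_mul, add_zero, zero_add, mul_one, norm_zero]
      have h2c : ((Real.sqrt 2 : ℝ) : ℂ) * ((Real.sqrt 2 : ℝ) : ℂ) = 2 := by
        rw [← Complex.ofReal_mul, Real.mul_self_sqrt (by norm_num)]; norm_num
      have he : (1 / (Real.sqrt 2 : ℂ)) * (1 / (Real.sqrt 2 : ℂ)) + 1 = (((3/2 : ℝ)) : ℂ) := by
        rw [div_mul_div_comm, one_mul, h2c]; norm_num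
      rw [he, Complex.norm_real, Real.norm_eq_abs]
      rw [show |(3/2 : ℝ)| = 3/2 by norm_num]
      rw [show (3/2:ℝ)^2 + 0^2 = (3/2)^2 by ring, Real.sqrt_sq (by norm_num)]
    have hle := (LinearMap.toContinuousLinearMap (Matrix.toEuclideanLin stmt9N)).le_opNorm u
    rw [hNu, hnu] at hle
    have hss : Real.sqrt (3/2) * Real.sqrt (3/2) = 3/2 := Real.mul_self_sqrt (by norm_num)
    have h' : Real.sqrt (3/2) * Real.sqrt (3/2) ≤ opNorm stmt9N * Real.sqrt (3/2) := by
      rw [hss]; exact hle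
    exact le_of_mul_le_mul_right h' hr32pos
  have heq : opNorm stmt9N = Real.sqrt (3/2) := le_antisymm hub hlb
  rw [heq, hr32]

/-- A contractive but not completely contractive homomorphism on `𝒪(Ω_A)`, `A = (I₂, E₁₂)`:
(a) for `|x|² + |y|² ≤ 1`, `‖[[x/√2, y],[0, x/√2]]‖ ≤ 1`;
(b) the 2×4 matrix with rows `(1/√2, 0, 0, 1)` and `(0, 0, 1/√2, 0)` has squared operator
norm `3/2 > 1`. -/
theorem stmt9 :
    (∀ x y : ℂ, ‖x‖ ^ 2 + ‖y‖ ^ 2 ≤ 1 →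
      opNorm !![x / (Real.sqrt 2 : ℂ), y; 0, x / (Real.sqrt 2 : ℂ)] ≤ 1) ∧
    opNorm !![(1 / (Real.sqrt 2 : ℂ)), 0, 0, 1;
              0, 0, (1 / (Real.sqrt 2 : ℂ)), 0] ^ 2 = 3 / 2 ∧
    1 < opNorm !![(1 / (Real.sqrt 2 : ℂ)), 0, 0, 1;
              0, 0, (1 / (Real.sqrt 2 : ℂ)), 0] ^ 2 := by
  refine ⟨stmt9_parta, stmt9_partb, ?_⟩
  rw [show opNorm !![(1 / (Real.sqrt 2 : ℂ)), 0, 0, 1;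
      0, 0, (1 / (Real.sqrt 2 : ℂ)), 0] ^ 2 = 3 / 2 from stmt9_partb]
  norm_num
end

section
/- The following two facts hold, exhibiting a contractive homomorphism of the algebra O(Ω_A) for the domain Ω_A of strictly upper-triangular-ball type in ℂ³ (A₁ = E₁₁, A₂ = E₁₂, A₃ = E₂₂) which is not completely contractive: (a) for all (x,y,z) ∈ ℂ³ with |x|² + |y|² + |z|² ≤ 1, the operator norm of the 2×2 matrix [[x/2, y],[0, z]] is at most 1; (b) the 2×6 complex matrix with first row (1/2, 0, 0, 0, 1, 0) and second row (0, 0, 0, 0, 0, 1) has operator norm squared equal to 5/4, which is strictly greater than 1. -/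
open scoped Kronecker

lemma opNorm_le_of {m n : Type*} [Fintype m] [Fintype n] [DecidableEq n]
    (M : Matrix m n ℂ) {c : ℝ} (hc : 0 ≤ c)
    (h : ∀ v : EuclideanSpace ℂ n, ‖Matrix.toEuclideanLin M v‖ ≤ c * ‖v‖) :
    opNorm M ≤ c := by
  apply ContinuousLinearMap.opNorm_le_bound _ hc
  intro v
  simpa using h v

lemma part_a : ∀ x y z : ℂ, ‖x‖ ^ 2 + ‖y‖ ^ 2 + ‖z‖ ^ 2 ≤ 1 →
    opNorm !![x / 2, y; 0, z] ≤ 1 := by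
  intro x y z hxyz
  apply opNorm_le_of _ zero_le_one
  intro v
  have e1 : ‖Matrix.toEuclideanLin !![x / 2, y; 0, z] v‖
      = Real.sqrt (‖x/2 * v 0 + y * v 1‖^2 + (‖z‖ * ‖v 1‖)^2) := by
    rw [EuclideanSpace.norm_eq]
    congr 1
    simp [Matrix.toEuclideanLin_apply, Matrix.mulVec, dotProduct, Matrix.vecHead, Matrix.vecTail,
      Fin.sum_univ_succ, WithLp.equiv_symm_apply, PiLp.toLp_apply, norm_mul]
  have e2 : ‖v‖ = Real.sqrt (‖v 0‖^2 + ‖v 1‖^2) := by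
    rw [EuclideanSpace.norm_eq]
    congr 1
    simp [Fin.sum_univ_succ]
  rw [e1, e2, one_mul]
  apply Real.sqrt_le_sqrt
  have hb : ‖x/2 * v 0 + y * v 1‖ ≤ ‖x‖ * ‖v 0‖ / 2 + ‖y‖ * ‖v 1‖ := by
    calc ‖x/2 * v 0 + y * v 1‖ ≤ ‖x/2 * v 0‖ + ‖y * v 1‖ := norm_add_le _ _
    _ = ‖x‖ * ‖v 0‖ / 2 + ‖y‖ * ‖v 1‖ := by
        simp [norm_mul, norm_div]; ring
  have h2 : ‖x/2 * v 0 + y * v 1‖^2 ≤ (‖x‖ * ‖v 0‖ / 2 + ‖y‖ * ‖v 1‖)^2 :=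
    pow_le_pow_left₀ (norm_nonneg _) hb 2
  have hS : (0:ℝ) ≤ 1 - (‖x‖^2 + ‖y‖^2 + ‖z‖^2) := by linarith
  nlinarith [sq_nonneg (‖x‖ * ‖v 1‖ - ‖y‖ * ‖v 0‖),
    mul_nonneg hS (sq_nonneg ‖v 0‖), mul_nonneg hS (sq_nonneg ‖v 1‖),
    mul_nonneg (mul_nonneg (norm_nonneg x) (norm_nonneg x)) (sq_nonneg ‖v 0‖),
    mul_nonneg (mul_nonneg (norm_nonneg z) (norm_nonneg z)) (sq_nonneg ‖v 0‖),
    mul_nonneg (mul_nonneg (norm_nonneg x) (norm_nonneg x)) (sq_nonneg ‖v 1‖)]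

lemma cons_val_five {α : Type*} (a b c d e f : α) :
    (![a, b, c, d, e, f] : Fin 6 → α) 5 = f := rfl

lemma part_b : opNorm !![(1 / 2 : ℂ), 0, 0, 0, 1, 0; 0, 0, 0, 0, 0, 1] ^ 2 = 5 / 4 := by
  set M : Matrix (Fin 2) (Fin 6) ℂ := !![(1 / 2 : ℂ), 0, 0, 0, 1, 0; 0, 0, 0, 0, 0, 1] with hM
  have hupper : opNorm M ≤ Real.sqrt (5/4) := by
    apply opNorm_le_of _ (Real.sqrt_nonneg _)
    intro v
    have e1 : ‖Matrix.toEuclideanLin M v‖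
        = Real.sqrt (‖(1/2 : ℂ) * v 0 + v 4‖^2 + ‖v 5‖^2) := by
      rw [EuclideanSpace.norm_eq]
      congr 1
      simp [hM, Matrix.toEuclideanLin_apply, Matrix.mulVec, dotProduct, Matrix.vecHead, Matrix.vecTail,
        Fin.sum_univ_six, Matrix.cons_val_four, Matrix.cons_val_succ, cons_val_five, WithLp.equiv_symm_apply, PiLp.toLp_apply]
    have e2 : ‖v‖ = Real.sqrt (‖v 0‖^2 + ‖v 1‖^2 + ‖v 2‖^2 + ‖v 3‖^2 + ‖v 4‖^2 + ‖v 5‖^2) := by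
      rw [EuclideanSpace.norm_eq]
      congr 1
      simp [Fin.sum_univ_six]
    rw [e1, e2, ← Real.sqrt_mul (by norm_num : (0:ℝ) ≤ 5/4)]
    apply Real.sqrt_le_sqrt
    have hb : ‖(1/2 : ℂ) * v 0 + v 4‖ ≤ ‖v 0‖ / 2 + ‖v 4‖ := by
      calc ‖(1/2 : ℂ) * v 0 + v 4‖ ≤ ‖(1/2 : ℂ) * v 0‖ + ‖v 4‖ := norm_add_le _ _
      _ = ‖v 0‖ / 2 + ‖v 4‖ := by simp [norm_mul]; ring
    have h2 : ‖(1/2 : ℂ) * v 0 + v 4‖^2 ≤ (‖v 0‖ / 2 + ‖v 4‖)^2 :=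
      pow_le_pow_left₀ (norm_nonneg _) hb 2
    nlinarith [sq_nonneg (‖v 0‖ - ‖v 4‖/2), sq_nonneg ‖v 1‖, sq_nonneg ‖v 2‖,
      sq_nonneg ‖v 3‖, sq_nonneg ‖v 5‖]
  have hlower : Real.sqrt (5/4) ≤ opNorm M := by
    set w : EuclideanSpace ℂ (Fin 6) :=
      (WithLp.equiv 2 (Fin 6 → ℂ)).symm ![1/2, 0, 0, 0, 1, 0] with hw
    have hwn : ‖w‖ = Real.sqrt (5/4) := by
      rw [EuclideanSpace.norm_eq]
      congr 1
      simp [hw, Fin.sum_univ_six, Matrix.cons_val_four, Matrix.cons_val_succ, cons_val_five, WithLp.equiv_symm_apply, PiLp.toLp_apply]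
      norm_num
    have hMw : ‖Matrix.toEuclideanLin M w‖ = 5/4 := by
      have e1 : ‖Matrix.toEuclideanLin M w‖ = Real.sqrt ((5/4)^2) := by
        rw [EuclideanSpace.norm_eq]
        congr 1
        simp [hM, hw, Matrix.toEuclideanLin_apply, Matrix.mulVec, dotProduct, Matrix.vecHead, Matrix.vecTail,
          Fin.sum_univ_six, Fin.sum_univ_two, Matrix.cons_val_four, Matrix.cons_val_succ, cons_val_five, WithLp.equiv_symm_apply, PiLp.toLp_apply]
        norm_num
      rw [e1, Real.sqrt_sq (by norm_num)]
    have h1 := (LinearMap.toContinuousLinearMap (Matrix.toEuclideanLin M)).le_opNorm w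
    simp only [LinearMap.coe_toContinuousLinearMap'] at h1
    rw [hMw, hwn] at h1
    have hs : Real.sqrt (5/4) * Real.sqrt (5/4) = 5/4 :=
      Real.mul_self_sqrt (by norm_num)
    have hpos : (0:ℝ) < Real.sqrt (5/4) := Real.sqrt_pos.mpr (by norm_num)
    have h2 : Real.sqrt (5/4) * Real.sqrt (5/4) ≤ opNorm M * Real.sqrt (5/4) := by
      rw [hs]; exact h1
    exact le_of_mul_le_mul_right h2 hpos
  have heq : opNorm M = Real.sqrt (5/4) := le_antisymm hupper hlower
  rw [heq, Real.sq_sqrt (by norm_num : (0:ℝ) ≤ 5/4)]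

/-- A contractive but not completely contractive homomorphism on `𝒪(Ω_A)` for the upper
triangular matrix ball in `ℂ³` (`A₁ = E₁₁`, `A₂ = E₁₂`, `A₃ = E₂₂`):
(a) for `|x|² + |y|² + |z|² ≤ 1`, `‖[[x/2, y],[0, z]]‖ ≤ 1`;
(b) the 2×6 matrix with rows `(1/2,0,0,0,1,0)` and `(0,0,0,0,0,1)` has squared operator
norm `5/4 > 1`. -/
theorem stmt10 :
    (∀ x y z : ℂ, ‖x‖ ^ 2 + ‖y‖ ^ 2 + ‖z‖ ^ 2 ≤ 1 →
      opNorm !![x / 2, y; 0, z] ≤ 1) ∧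
    opNorm !![(1 / 2 : ℂ), 0, 0, 0, 1, 0; 0, 0, 0, 0, 0, 1] ^ 2 = 5 / 4 ∧
    1 < opNorm !![(1 / 2 : ℂ), 0, 0, 0, 1, 0; 0, 0, 0, 0, 0, 1] ^ 2 := by
  refine ⟨part_a, part_b, ?_⟩
  rw [part_b]; norm_num
end

section
/- Let A₁ = diag(d₁, d₂) and A₂ = diag(a, d) be diagonal 2×2 complex matrices, and let v, w ∈ ℂ. For β ∈ ℂ² with ‖β‖₂ = 1, define g(β) = 1 − |v|²·‖A₁*β‖² − |w|²·‖A₂*β‖² + |v|²|w|²·(‖A₁*β‖²·‖A₂*β‖² − |⟨A₁A₂*β, β⟩|²), where A* denotes the conjugate transpose. Then for every unit vector β ∈ ℂ², g(β) ≥ min(g(e₁), g(e₂)), where e₁ = (1,0) and e₂ = (0,1); that is, the infimum of g over the unit sphere is attained at e₁ or at e₂. -/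
open Matrix

private lemma diagCT (x y : ℂ) :
    (!![x, 0; 0, y])ᴴ = !![(starRingEnd ℂ) x, 0; 0, (starRingEnd ℂ) y] := by
  ext i j; fin_cases i <;> fin_cases j <;> simp

private lemma sumNorm (x y : ℂ) (β : Fin 2 → ℂ) :
    (∑ i, ‖(!![x, 0; 0, y])ᴴ.mulVec β i‖ ^ 2) = ‖x‖^2 * ‖β 0‖^2 + ‖y‖^2 * ‖β 1‖^2 := by
  rw [diagCT]
  simp [Fin.sum_univ_two, mulVec, dotProduct, mul_pow]

private lemma sumInner (d1 d2 a d : ℂ) (β : Fin 2 → ℂ) :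
    (∑ i, (!![d1, 0; 0, d2] * (!![a, 0; 0, d])ᴴ).mulVec β i * (starRingEnd ℂ) (β i)) =
      d1 * (starRingEnd ℂ) a * ((‖β 0‖^2 : ℝ) : ℂ)
      + d2 * (starRingEnd ℂ) d * ((‖β 1‖^2 : ℝ) : ℂ) := by
  have hz : ∀ z : ℂ, ((‖z‖^2 : ℝ) : ℂ) = z * (starRingEnd ℂ) z := by
    intro z
    rw [Complex.mul_conj, Complex.normSq_eq_norm_sq]
  rw [diagCT, hz, hz]
  simp [Fin.sum_univ_two, mulVec, dotProduct, Matrix.mul_apply]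
  ring

set_option maxHeartbeats 2000000 in
/-- For simultaneously diagonal `A₁ = diag(d₁,d₂)`, `A₂ = diag(a,d)` and scalars `v, w`,
the function
`g(β) = 1 − |v|²‖A₁*β‖² − |w|²‖A₂*β‖² + |v|²|w|²(‖A₁*β‖²‖A₂*β‖² − |⟨A₁A₂*β, β⟩|²)`
attains its infimum over the unit sphere of `ℂ²` at `e₁ = (1,0)` or at `e₂ = (0,1)`. -/
theorem stmt11 (d1 d2 a d v w : ℂ)
    (A1 A2 : Matrix (Fin 2) (Fin 2) ℂ)
    (hA1 : A1 = !![d1, 0; 0, d2]) (hA2 : A2 = !![a, 0; 0, d])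
    (g : (Fin 2 → ℂ) → ℝ)
    (hg : ∀ β : Fin 2 → ℂ,
      g β = 1 - ‖v‖ ^ 2 * (∑ i, ‖A1ᴴ.mulVec β i‖ ^ 2)
              - ‖w‖ ^ 2 * (∑ i, ‖A2ᴴ.mulVec β i‖ ^ 2)
              + ‖v‖ ^ 2 * ‖w‖ ^ 2 *
                ((∑ i, ‖A1ᴴ.mulVec β i‖ ^ 2) * (∑ i, ‖A2ᴴ.mulVec β i‖ ^ 2)
                  - ‖∑ i, (A1 * A2ᴴ).mulVec β i * (starRingEnd ℂ) (β i)‖ ^ 2)) :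
    ∀ β : Fin 2 → ℂ, (∑ i, ‖β i‖ ^ 2) = 1 →
      min (g ![1, 0]) (g ![0, 1]) ≤ g β := by
  subst hA1 hA2
  intro β hβ
  simp only [Fin.sum_univ_two] at hβ
  have hg1 := hg ![1, 0]
  have hg2 := hg ![0, 1]
  have hgβ := hg β
  rw [sumNorm, sumNorm, sumInner] at hg1 hg2 hgβ
  simp only [Matrix.cons_val_zero, Matrix.cons_val_one, Matrix.head_cons] at hg1 hg2
  norm_num at hg1 hg2
  set t := ‖β 0‖^2 with ht_def
  set s := ‖β 1‖^2 with hs_def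
  have ht : 0 ≤ t := by positivity
  have hs : 0 ≤ s := by positivity
  set V := ‖v‖^2
  set W := ‖w‖^2
  have hV : 0 ≤ V := by positivity
  have hW : 0 ≤ W := by positivity
  -- bound on the cross term
  have hub : ‖d1 * (starRingEnd ℂ) a * ((t:ℝ):ℂ) + d2 * (starRingEnd ℂ) d * ((s:ℝ):ℂ)‖
      ≤ ‖d1‖ * ‖a‖ * t + ‖d2‖ * ‖d‖ * s := by
    calc _ ≤ ‖d1 * (starRingEnd ℂ) a * ((t:ℝ):ℂ)‖ + ‖d2 * (starRingEnd ℂ) d * ((s:ℝ):ℂ)‖ :=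
          norm_add_le _ _
      _ = ‖d1‖ * ‖a‖ * t + ‖d2‖ * ‖d‖ * s := by
          simp [norm_mul, Complex.norm_real, abs_of_nonneg ht, abs_of_nonneg hs]
  have hub2 : ‖d1 * (starRingEnd ℂ) a * ((t:ℝ):ℂ) + d2 * (starRingEnd ℂ) d * ((s:ℝ):ℂ)‖^2
      ≤ (‖d1‖ * ‖a‖ * t + ‖d2‖ * ‖d‖ * s)^2 := by
    apply sq_le_sq' _ hub
    nlinarith [norm_nonneg (d1 * (starRingEnd ℂ) a * ((t:ℝ):ℂ) + d2 * (starRingEnd ℂ) d * ((s:ℝ):ℂ))]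
  have hterm : 0 ≤ (‖d1‖^2 * t + ‖d2‖^2 * s) * (‖a‖^2 * t + ‖d‖^2 * s)
      - ‖d1 * (starRingEnd ℂ) a * ((t:ℝ):ℂ) + d2 * (starRingEnd ℂ) d * ((s:ℝ):ℂ)‖^2 := by
    nlinarith [hub2, mul_nonneg (mul_nonneg ht hs) (sq_nonneg (‖d1‖*‖d‖ - ‖d2‖*‖a‖))]
  have e1 : t * min (g ![1, 0]) (g ![0, 1]) ≤ t * g ![1, 0] :=
    mul_le_mul_of_nonneg_left (min_le_left _ _) ht
  have e2 : s * min (g ![1, 0]) (g ![0, 1]) ≤ s * g ![0, 1] :=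
    mul_le_mul_of_nonneg_left (min_le_right _ _) hs
  have hMsum : t * min (g ![1, 0]) (g ![0, 1]) + s * min (g ![1, 0]) (g ![0, 1])
      = min (g ![1, 0]) (g ![0, 1]) := by rw [← add_mul, hβ, one_mul]
  have key : min (g ![1, 0]) (g ![0, 1]) ≤ t * g ![1, 0] + s * g ![0, 1] := by
    linarith [e1, e2, hMsum]
  have key2 : t * g ![1, 0] + s * g ![0, 1] ≤ g β := by
    rw [hg1, hg2, hgβ]
    nlinarith [mul_nonneg (mul_nonneg hV hW) hterm, hβ]
  linarith [key, key2]
end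

section
/- Let α₁, α₂ ∈ ℂ, let B be an m×n complex matrix, and let T be the (m+n)×(m+n) block matrix [[α₁·I_m, B],[0, α₂·I_n]]. Then ‖T‖_op² = ((|α₂|² + ‖B‖_op² + |α₁|²) + √((|α₂|² + ‖B‖_op² − |α₁|²)² + 4‖B‖_op²·|α₁|²))/2. -/
open scoped Kronecker

noncomputable def lamE (a b c : ℝ) : ℝ :=
  ((c^2 + b^2 + a^2) + Real.sqrt ((c^2 + b^2 - a^2)^2 + 4*b^2*a^2))/2

lemma lamE_facts {a b c : ℝ} (ha : 0 ≤ a) (hb : 0 ≤ b) (hc : 0 ≤ c) :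
    a^2 ≤ lamE a b c ∧ b^2 + c^2 ≤ lamE a b c ∧
      (lamE a b c - a^2) * (lamE a b c - (b^2 + c^2)) = a^2 * b^2 := by
  have hΔ : (0:ℝ) ≤ (c^2+b^2-a^2)^2 + 4*b^2*a^2 := by positivity
  have h1 : Real.sqrt ((c^2+b^2-a^2)^2 + 4*b^2*a^2) ^ 2
      = (c^2+b^2-a^2)^2 + 4*b^2*a^2 := Real.sq_sqrt hΔ
  have h2 : |c^2+b^2-a^2| ≤ Real.sqrt ((c^2+b^2-a^2)^2 + 4*b^2*a^2) := by
    rw [← Real.sqrt_sq_eq_abs]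
    exact Real.sqrt_le_sqrt (by nlinarith)
  obtain ⟨h2a, h2b⟩ := abs_le.mp h2
  refine ⟨by unfold lamE; linarith, by unfold lamE; linarith, ?_⟩
  unfold lamE
  nlinarith [h1]

lemma lamE_quad_le {a b c : ℝ} (ha : 0 ≤ a) (hb : 0 ≤ b) (hc : 0 ≤ c) (p q : ℝ) :
    (a*p + b*q)^2 + c^2*q^2 ≤ lamE a b c * (p^2 + q^2) := by
  obtain ⟨hA, hB, hprod⟩ := lamE_facts ha hb hc
  set L := lamE a b c with hL
  have ht : Real.sqrt (L - a^2) ^ 2 = L - a^2 := Real.sq_sqrt (by linarith)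
  have hs : Real.sqrt (L - (b^2+c^2)) ^ 2 = L - (b^2+c^2) := Real.sq_sqrt (by linarith)
  have hst : Real.sqrt (L - a^2) * Real.sqrt (L - (b^2+c^2)) = a * b := by
    rw [← Real.sqrt_mul (by linarith)]
    rw [show (L - a^2) * (L - (b^2+c^2)) = (a*b)^2 by nlinarith]
    exact Real.sqrt_sq (by positivity)
  have hkey : (Real.sqrt (L - a^2) * p - Real.sqrt (L - (b^2+c^2)) * q)^2
      = (L - a^2)*p^2 - 2*(a*b)*(p*q) + (L - (b^2+c^2))*q^2 := by
    rw [show (Real.sqrt (L - a^2) * p - Real.sqrt (L - (b^2+c^2)) * q)^2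
        = Real.sqrt (L - a^2)^2 * p^2
          - 2*(Real.sqrt (L - a^2) * Real.sqrt (L - (b^2+c^2)))*(p*q)
          + Real.sqrt (L - (b^2+c^2))^2 * q^2 by ring, ht, hs, hst]
  nlinarith [sq_nonneg (Real.sqrt (L - a^2) * p - Real.sqrt (L - (b^2+c^2)) * q), hkey]

lemma lamE_quad_eq {a b c : ℝ} (ha : 0 ≤ a) (hb : 0 ≤ b) (hc : 0 ≤ c) :
    ∃ p q : ℝ, 0 ≤ p ∧ 0 ≤ q ∧ p^2 + q^2 = 1 ∧
      (a*p + b*q)^2 + c^2*q^2 = lamE a b c := by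
  obtain ⟨hA, hB, hprod⟩ := lamE_facts ha hb hc
  set L := lamE a b c with hL
  set D := Real.sqrt ((c^2+b^2-a^2)^2 + 4*b^2*a^2) with hD
  have hDnn : 0 ≤ D := Real.sqrt_nonneg _
  have hsumD : Real.sqrt (L - (b^2+c^2)) ^ 2 + Real.sqrt (L - a^2) ^ 2 = D := by
    rw [Real.sq_sqrt (by linarith), Real.sq_sqrt (by linarith)]
    have : L = ((c^2 + b^2 + a^2) + D)/2 := rfl
    linarith
  rcases eq_or_lt_of_le hDnn with hD0 | hDpos
  · have hΔ0 : (c^2+b^2-a^2)^2 + 4*b^2*a^2 = 0 := by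
      have h := Real.sqrt_eq_zero'.mp hD0.symm
      nlinarith [sq_nonneg (c^2+b^2-a^2), sq_nonneg (a*b)]
    have hd : c^2 + b^2 - a^2 = 0 := by nlinarith [sq_nonneg (c^2+b^2-a^2)]
    refine ⟨1, 0, zero_le_one, le_refl 0, by ring, ?_⟩
    have : L = ((c^2 + b^2 + a^2) + D)/2 := rfl
    rw [this, ← hD0]
    ring_nf
    linarith
  · set t := Real.sqrt (L - a^2) with htdef
    set s := Real.sqrt (L - (b^2+c^2)) with hsdef
    have ht : t ^ 2 = L - a^2 := Real.sq_sqrt (by linarith)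
    have hs : s ^ 2 = L - (b^2+c^2) := Real.sq_sqrt (by linarith)
    have hst : t * s = a * b := by
      rw [htdef, hsdef, ← Real.sqrt_mul (by linarith)]
      rw [show (L - a^2) * (L - (b^2+c^2)) = (a*b)^2 by nlinarith]
      exact Real.sqrt_sq (by positivity)
    set r := Real.sqrt D with hrdef
    have hr : r ^ 2 = D := Real.sq_sqrt hDnn
    have hrpos : 0 < r := Real.sqrt_pos.mpr hDpos
    refine ⟨s/r, t/r, by positivity, by positivity, ?_, ?_⟩
    · field_simp
      rw [hr]; linarith [hsumD]
    · have hsum : s^2 + t^2 = D := hsumD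
      have hmain : (a*s + b*t)^2 + c^2*t^2 = L * D := by
        linear_combination (s^2)*ht + (t^2)*hs - 2*s*t*hst + L*hsum
      have hrw : (a*(s/r) + b*(t/r))^2 + c^2*(t/r)^2 = ((a*s+b*t)^2 + c^2*t^2)/r^2 := by
        field_simp
      rw [hrw, hmain, hr, mul_div_assoc, div_self hDpos.ne', mul_one]

lemma exists_norm_attain {E F : Type*} [NormedAddCommGroup E] [NormedSpace ℂ E]
    [FiniteDimensional ℂ E] [Nontrivial E] [NormedAddCommGroup F] [NormedSpace ℂ F]
    (f : E →L[ℂ] F) : ∃ v : E, ‖v‖ = 1 ∧ ‖f v‖ = ‖f‖ := by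
  obtain ⟨x0, hx0⟩ := exists_norm_eq E (zero_le_one' ℝ)
  have hsph : (Metric.sphere (0:E) 1).Nonempty := ⟨x0, by simp [hx0]⟩
  obtain ⟨v, hv, hmax⟩ := (isCompact_sphere (0:E) 1).exists_isMaxOn hsph
    (Continuous.continuousOn (by continuity : Continuous fun x : E => ‖f x‖))
  rw [mem_sphere_zero_iff_norm] at hv
  refine ⟨v, hv, le_antisymm (by simpa [hv] using f.le_opNorm v) ?_⟩
  apply f.opNorm_le_bound (norm_nonneg _)
  intro x
  rcases eq_or_ne x 0 with rfl | hx
  · simp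
  · have hxn : ‖x‖ ≠ 0 := norm_ne_zero_iff.mpr hx
    have hu : (‖x‖⁻¹ • x) ∈ Metric.sphere (0:E) 1 := by
      rw [mem_sphere_zero_iff_norm, norm_smul, norm_inv, norm_norm,
        inv_mul_cancel₀ hxn]
    have := hmax hu
    simp only [Set.mem_setOf_eq, ContinuousLinearMap.map_smul_of_tower, map_smul,
      norm_smul, norm_inv, norm_norm] at this
    have h2 : ‖f x‖ = ‖x‖ * (‖x‖⁻¹ * ‖f x‖) := by field_simp
    rw [h2, mul_comm ‖f v‖ ‖x‖]
    exact mul_le_mul_of_nonneg_left this (norm_nonneg x)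

section blocks
variable {m n : ℕ}

noncomputable def pL (x : EuclideanSpace ℂ (Fin m ⊕ Fin n)) : EuclideanSpace ℂ (Fin m) :=
  WithLp.toLp 2 (fun i => x (Sum.inl i))

noncomputable def pR (x : EuclideanSpace ℂ (Fin m ⊕ Fin n)) : EuclideanSpace ℂ (Fin n) :=
  WithLp.toLp 2 (fun j => x (Sum.inr j))

noncomputable def mkV (x₁ : EuclideanSpace ℂ (Fin m)) (x₂ : EuclideanSpace ℂ (Fin n)) :
    EuclideanSpace ℂ (Fin m ⊕ Fin n) :=
  WithLp.toLp 2 (fun s => Sum.elim (fun i => x₁ i) (fun j => x₂ j) s)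

lemma norm_split (x : EuclideanSpace ℂ (Fin m ⊕ Fin n)) :
    ‖x‖^2 = ‖pL x‖^2 + ‖pR x‖^2 := by
  rw [EuclideanSpace.norm_eq, EuclideanSpace.norm_eq, EuclideanSpace.norm_eq,
    Real.sq_sqrt (by positivity), Real.sq_sqrt (by positivity),
    Real.sq_sqrt (by positivity)]
  exact Fintype.sum_sum_type (fun s => ‖x s‖ ^ 2)

lemma mulVec_comp (T : Matrix (Fin m ⊕ Fin n) (Fin m ⊕ Fin n) ℂ)
    (x : EuclideanSpace ℂ (Fin m ⊕ Fin n)) (s : Fin m ⊕ Fin n) :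
    Matrix.toEuclideanLin T x s = (T.mulVec (Sum.elim (pL x) (pR x))) s := by
  have hx : x.ofLp = Sum.elim (pL x) (pR x) := by
    funext t; cases t <;> rfl
  rw [Matrix.toEuclideanLin_apply, hx]

lemma euclid_apply (M : Matrix (Fin m) (Fin n) ℂ) (y : EuclideanSpace ℂ (Fin n)) (i : Fin m) :
    Matrix.toEuclideanLin M y i = M.mulVec (fun j => y j) i := by
  rw [Matrix.toEuclideanLin_apply]

end blocks

set_option maxHeartbeats 2000000 in
/-- The operator norm of the block matrix `[[α₁ I_m, B],[0, α₂ I_n]]`: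
`‖T‖² = ((|α₂|² + ‖B‖² + |α₁|²) + √((|α₂|² + ‖B‖² − |α₁|²)² + 4‖B‖²|α₁|²))/2`. -/
theorem stmt12 {m n : ℕ} (hm : 0 < m) (hn : 0 < n)
    (α₁ α₂ : ℂ) (B : Matrix (Fin m) (Fin n) ℂ) :
    opNorm (Matrix.fromBlocks (α₁ • (1 : Matrix (Fin m) (Fin m) ℂ)) B
        0 (α₂ • (1 : Matrix (Fin n) (Fin n) ℂ))) ^ 2
      = ((‖α₂‖ ^ 2 + opNorm B ^ 2 + ‖α₁‖ ^ 2)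
          + Real.sqrt ((‖α₂‖ ^ 2 + opNorm B ^ 2 - ‖α₁‖ ^ 2) ^ 2
              + 4 * opNorm B ^ 2 * ‖α₁‖ ^ 2)) / 2 := by
  classical
  set T : Matrix (Fin m ⊕ Fin n) (Fin m ⊕ Fin n) ℂ :=
    Matrix.fromBlocks (α₁ • (1 : Matrix (Fin m) (Fin m) ℂ)) B
      0 (α₂ • (1 : Matrix (Fin n) (Fin n) ℂ)) with hT
  set f := LinearMap.toContinuousLinearMap (Matrix.toEuclideanLin T) with hf
  set g := LinearMap.toContinuousLinearMap (Matrix.toEuclideanLin B) with hg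
  set a := ‖α₁‖ with ha'
  set b := opNorm B with hb'
  set c := ‖α₂‖ with hc'
  have ha : 0 ≤ a := norm_nonneg _
  have hb : 0 ≤ b := norm_nonneg _
  have hc : 0 ≤ c := norm_nonneg _
  set L := lamE a b c with hL
  obtain ⟨hLa, hLbc, _⟩ := lamE_facts ha hb hc
  have hL0 : 0 ≤ L := le_trans (by positivity) hLa
  -- the action of f in components
  have hgb : ∀ y : EuclideanSpace ℂ (Fin n), ‖g y‖ ≤ b * ‖y‖ := fun y => g.le_opNorm y
  have hact : ∀ x : EuclideanSpace ℂ (Fin m ⊕ Fin n),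
      pL (f x) = α₁ • pL x + g (pR x) ∧ pR (f x) = α₂ • pR x := by
    intro x
    constructor
    · refine PiLp.ext fun i => ?_
      have h1 : pL (f x) i = (T.mulVec (Sum.elim (pL x) (pR x))) (Sum.inl i) :=
        mulVec_comp T x (Sum.inl i)
      rw [h1, hT, Matrix.fromBlocks_mulVec, Sum.elim_comp_inl, Sum.elim_comp_inr,
        Sum.elim_inl]
      have h2 : ((α₁ • (1 : Matrix (Fin m) (Fin m) ℂ)).mulVec (pL x)
            + B.mulVec (pR x)) i
          = α₁ * pL x i + B.mulVec (fun j => pR x j) i := by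
        simp [Matrix.smul_mulVec, Matrix.one_mulVec]
      rw [h2]
      have h3 : (α₁ • pL x + g (pR x)) i = α₁ * pL x i + g (pR x) i := rfl
      rw [h3, show g (pR x) i = B.mulVec (fun j => pR x j) i from euclid_apply B (pR x) i]
    · refine PiLp.ext fun j => ?_
      have h1 : pR (f x) j = (T.mulVec (Sum.elim (pL x) (pR x))) (Sum.inr j) :=
        mulVec_comp T x (Sum.inr j)
      rw [h1, hT, Matrix.fromBlocks_mulVec, Sum.elim_comp_inl, Sum.elim_comp_inr,
        Sum.elim_inr]
      have h2 : ((0 : Matrix (Fin n) (Fin m) ℂ).mulVec (pL x)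
            + (α₂ • (1 : Matrix (Fin n) (Fin n) ℂ)).mulVec (pR x)) j
          = α₂ * pR x j := by
        simp [Matrix.smul_mulVec, Matrix.one_mulVec, Matrix.zero_mulVec]
      rw [h2]
      rfl
  have hnormfx : ∀ x : EuclideanSpace ℂ (Fin m ⊕ Fin n),
      ‖f x‖^2 = ‖α₁ • pL x + g (pR x)‖^2 + (c * ‖pR x‖)^2 := by
    intro x
    rw [norm_split (f x), (hact x).1, (hact x).2, norm_smul]
  -- upper bound
  have hub : ‖f‖ ≤ Real.sqrt L := by
    apply f.opNorm_le_bound (Real.sqrt_nonneg _)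
    intro x
    have h1 : ‖α₁ • pL x + g (pR x)‖ ≤ a * ‖pL x‖ + b * ‖pR x‖ := by
      calc ‖α₁ • pL x + g (pR x)‖ ≤ ‖α₁ • pL x‖ + ‖g (pR x)‖ := norm_add_le _ _
        _ ≤ a * ‖pL x‖ + b * ‖pR x‖ := by
            rw [norm_smul]; exact add_le_add le_rfl (hgb _)
    have hq := lamE_quad_le ha hb hc ‖pL x‖ ‖pR x‖
    have h3 : ‖f x‖^2 ≤ L * ‖x‖^2 := by
      rw [hnormfx x, norm_split x]
      nlinarith [h1, norm_nonneg (α₁ • pL x + g (pR x)), norm_nonneg (pL x),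
        norm_nonneg (pR x), mul_nonneg ha (norm_nonneg (pL x)),
        mul_nonneg hb (norm_nonneg (pR x))]
    calc ‖f x‖ = Real.sqrt (‖f x‖^2) := (Real.sqrt_sq (norm_nonneg _)).symm
      _ ≤ Real.sqrt (L * ‖x‖^2) := Real.sqrt_le_sqrt h3
      _ = Real.sqrt L * ‖x‖ := by
          rw [Real.sqrt_mul hL0, Real.sqrt_sq (norm_nonneg _)]
  -- lower bound
  haveI : Nontrivial (EuclideanSpace ℂ (Fin n)) := by
    refine nontrivial_of_ne (EuclideanSpace.single ⟨0, hn⟩ 1) 0 ?_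
    intro h
    have := congrArg (fun z => ‖z‖) h
    simp [EuclideanSpace.norm_single] at this
  obtain ⟨v, hv1, hv2⟩ := exists_norm_attain g
  have hv2' : ‖g v‖ = b := hv2
  obtain ⟨u, hu1, hu2⟩ : ∃ u : EuclideanSpace ℂ (Fin m), ‖u‖ = 1 ∧ g v = (b:ℂ) • u := by
    by_cases hb0 : b = 0
    · refine ⟨EuclideanSpace.single ⟨0, hm⟩ 1, by simp [EuclideanSpace.norm_single], ?_⟩
      have : ‖g v‖ = 0 := by rw [hv2', hb0]
      rw [norm_eq_zero.mp this, hb0]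
      simp
    · refine ⟨(b:ℂ)⁻¹ • g v, ?_, ?_⟩
      · rw [norm_smul, hv2', norm_inv]
        simp only [Complex.norm_real, Real.norm_eq_abs, abs_of_nonneg hb]
        exact inv_mul_cancel₀ hb0
      · rw [smul_inv_smul₀ (by exact_mod_cast hb0)]
  obtain ⟨p, q, hp, hq, hpq, hval⟩ := lamE_quad_eq ha hb hc
  set ζ : ℂ := if α₁ = 0 then 1 else (a : ℂ) / α₁ with hζ
  have hζ1 : ‖ζ‖ = 1 := by
    rw [hζ]
    split_ifs with h0
    · simp
    · rw [norm_div, Complex.norm_real, Real.norm_eq_abs, abs_of_nonneg ha, ha']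
      exact div_self (norm_ne_zero_iff.mpr h0)
  have hζ2 : α₁ * ζ = (a : ℂ) := by
    rw [hζ]
    split_ifs with h0
    · simp [h0, ha']
    · field_simp
  set x₁ : EuclideanSpace ℂ (Fin m) := ((p : ℂ) * ζ) • u with hx₁
  set x₂ : EuclideanSpace ℂ (Fin n) := (q : ℂ) • v with hx₂
  set x : EuclideanSpace ℂ (Fin m ⊕ Fin n) := mkV x₁ x₂ with hx
  have hpLx : pL x = x₁ := rfl
  have hpRx : pR x = x₂ := rfl
  have hnx₁ : ‖x₁‖ = p := by
    rw [hx₁, norm_smul, norm_mul, hζ1, hu1, Complex.norm_real, Real.norm_eq_abs,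
      abs_of_nonneg hp]
    ring
  have hnx₂ : ‖x₂‖ = q := by
    rw [hx₂, norm_smul, hv1, Complex.norm_real, Real.norm_eq_abs, abs_of_nonneg hq]
    ring
  have hxnorm : ‖x‖ = 1 := by
    have h1 : ‖x‖^2 = 1 := by
      rw [norm_split x, hpLx, hpRx, hnx₁, hnx₂, hpq]
    rw [← Real.sqrt_sq (norm_nonneg x), h1, Real.sqrt_one]
  have htop : α₁ • pL x + g (pR x) = (((a*p + b*q : ℝ)) : ℂ) • u := by
    rw [hpLx, hpRx, hx₁, hx₂, map_smul, hu2, smul_smul, smul_smul, ← add_smul]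
    congr 1
    rw [show α₁ * ((p:ℂ) * ζ) = (p:ℂ) * (α₁ * ζ) by ring, hζ2]
    push_cast
    ring
  have hfxval : ‖f x‖^2 = L := by
    rw [hnormfx x, htop, norm_smul, hu1, hpRx, hnx₂]
    rw [Complex.norm_real, Real.norm_eq_abs, abs_of_nonneg (by positivity)]
    rw [hL, ← hval]
    ring
  have hlb : Real.sqrt L ≤ ‖f‖ := by
    have h1 : Real.sqrt L = ‖f x‖ := by
      rw [← hfxval, Real.sqrt_sq (norm_nonneg _)]
    rw [h1]
    calc ‖f x‖ ≤ ‖f‖ * ‖x‖ := f.le_opNorm x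
      _ = ‖f‖ := by rw [hxnorm, mul_one]
  have hfinal : ‖f‖ = Real.sqrt L := le_antisymm hub hlb
  have hop : opNorm T = ‖f‖ := rfl
  rw [hop, hfinal, Real.sq_sqrt hL0]
  rfl
end

section
/- Let α₁, α₂ ∈ ℂ, let B be an m×n complex matrix, and let T be the block matrix [[α₁·I_m, B],[0, α₂·I_n]]. Then ‖T‖_op ≤ 1 if and only if |α₁| ≤ 1, |α₂| ≤ 1, and ‖B‖_op² ≤ (1 − |α₁|²)(1 − |α₂|²). -/
open scoped Kronecker

section aux

private lemma aux_back (a d s X Y : ℝ) (ha0 : 0 ≤ a) (ha : a ≤ 1) (hd0 : 0 ≤ d) (hd : d ≤ 1)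
    (hs : 0 ≤ s) (hX : 0 ≤ X) (hY : 0 ≤ Y) (h : s^2 ≤ (1-a^2)*(1-d^2)) :
    (a*X + s*Y)^2 + d^2*Y^2 ≤ X^2 + Y^2 := by
  rcases eq_or_lt_of_le ha with rfl | ha1
  · have hs0 : s = 0 := by nlinarith
    subst hs0
    nlinarith [mul_nonneg (by nlinarith : (0:ℝ) ≤ 1 - d^2) (sq_nonneg Y)]
  · have hu : (0:ℝ) < 1 - a^2 := by nlinarith
    nlinarith [sq_nonneg ((1-a^2)*X - a*s*Y), mul_nonneg (sub_nonneg.2 h) (sq_nonneg Y), hu,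
      mul_pos hu hu]

private lemma aux_fwd_lt (a d s Y : ℝ) (ha0 : 0 ≤ a) (ha : a < 1) (hs : 0 < s) (hY : 0 ≤ Y)
    (hQ : ∀ t : ℝ, 0 ≤ t → (t*a+s)^2 + d^2*Y^2 ≤ t^2 + Y^2) :
    s^2 ≤ (1-a^2)*(1-d^2)*Y^2 := by
  have hu : (0:ℝ) < 1 - a^2 := by nlinarith
  set t := a*s/(1-a^2) with htdef
  have ht : 0 ≤ t := by positivity
  have ht' : (1-a^2)*t = a*s := by rw [htdef]; field_simp [hu.ne']
  nlinarith [hQ t ht, ht', hu, sq_nonneg t, mul_le_mul_of_nonneg_left (hQ t ht) hu.le]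

private lemma aux_fwd_eq (d s Y : ℝ) (hs : 0 < s) (hY : 0 ≤ Y)
    (hQ : ∀ t : ℝ, 0 ≤ t → (t*1+s)^2 + d^2*Y^2 ≤ t^2 + Y^2) :
    s^2 ≤ (1-1^2)*(1-d^2)*Y^2 := by
  have h := hQ ((Y^2+1)/(2*s)) (by positivity)
  have h2 : 2*s*((Y^2+1)/(2*s)) = Y^2+1 := by field_simp
  nlinarith [sq_nonneg (d*Y), sq_nonneg s]

private noncomputable def packV {m n : ℕ} (x : EuclideanSpace ℂ (Fin m))
    (y : EuclideanSpace ℂ (Fin n)) : EuclideanSpace ℂ (Fin m ⊕ Fin n) :=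
  (WithLp.equiv 2 ((Fin m ⊕ Fin n) → ℂ)).symm
    (Sum.elim (WithLp.equiv 2 _ x) (WithLp.equiv 2 _ y))

private lemma packV_norm {m n : ℕ} (x : EuclideanSpace ℂ (Fin m))
    (y : EuclideanSpace ℂ (Fin n)) : ‖packV x y‖^2 = ‖x‖^2 + ‖y‖^2 := by
  simp only [packV, EuclideanSpace.norm_eq]
  rw [Real.sq_sqrt (by positivity), Real.sq_sqrt (by positivity), Real.sq_sqrt (by positivity),
    Fintype.sum_sum_type]
  simp

private lemma packV_surj {m n : ℕ} (v : EuclideanSpace ℂ (Fin m ⊕ Fin n)) :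
    ∃ x y, v = packV x y := by
  refine ⟨(WithLp.equiv 2 _).symm (fun i => v (Sum.inl i)),
    (WithLp.equiv 2 _).symm (fun j => v (Sum.inr j)), ?_⟩
  simp only [packV, Equiv.apply_symm_apply]
  ext i
  cases i <;> rfl

private lemma T_apply {m n : ℕ} (α₁ α₂ : ℂ) (B : Matrix (Fin m) (Fin n) ℂ)
    (x : EuclideanSpace ℂ (Fin m)) (y : EuclideanSpace ℂ (Fin n)) :
    Matrix.toEuclideanLin (Matrix.fromBlocks (α₁ • (1 : Matrix (Fin m) (Fin m) ℂ)) B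
        0 (α₂ • (1 : Matrix (Fin n) (Fin n) ℂ))) (packV x y)
      = packV (α₁ • x + Matrix.toEuclideanLin B y) (α₂ • y) := by
  simp only [packV]
  erw [Matrix.toEuclideanLin_apply_piLp_toLp, Matrix.fromBlocks_mulVec]
  simp [Matrix.smul_mulVec, Matrix.toEuclideanLin_apply]

private lemma norm_le_one_iff {m n : ℕ} (α₁ α₂ : ℂ) (B : Matrix (Fin m) (Fin n) ℂ) :
    opNorm (Matrix.fromBlocks (α₁ • (1 : Matrix (Fin m) (Fin m) ℂ)) B
        0 (α₂ • (1 : Matrix (Fin n) (Fin n) ℂ))) ≤ 1 ↔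
      ∀ (x : EuclideanSpace ℂ (Fin m)) (y : EuclideanSpace ℂ (Fin n)),
        ‖α₁ • x + Matrix.toEuclideanLin B y‖^2 + ‖α₂‖^2*‖y‖^2 ≤ ‖x‖^2 + ‖y‖^2 := by
  set L := LinearMap.toContinuousLinearMap (Matrix.toEuclideanLin
    (Matrix.fromBlocks (α₁ • (1 : Matrix (Fin m) (Fin m) ℂ)) B
      0 (α₂ • (1 : Matrix (Fin n) (Fin n) ℂ)))) with hLdef
  have hLV : ∀ x y, L (packV x y) = packV (α₁ • x + Matrix.toEuclideanLin B y) (α₂ • y) :=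
    fun x y => T_apply α₁ α₂ B x y
  have hLVnorm : ∀ x y, ‖L (packV x y)‖^2
      = ‖α₁ • x + Matrix.toEuclideanLin B y‖^2 + ‖α₂‖^2*‖y‖^2 := by
    intro x y
    rw [hLV, packV_norm, norm_smul, mul_pow]
  constructor
  · intro h x y
    have h1 : ‖L (packV x y)‖ ≤ ‖packV x y‖ := by
      calc ‖L (packV x y)‖ ≤ ‖L‖ * ‖packV x y‖ := L.le_opNorm _
      _ ≤ 1 * ‖packV x y‖ := by gcongr; exact h
      _ = ‖packV x y‖ := one_mul _
    rw [← hLVnorm, ← packV_norm]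
    exact pow_le_pow_left₀ (norm_nonneg _) h1 2
  · intro h
    refine L.opNorm_le_bound zero_le_one (fun v => ?_)
    rw [one_mul]
    obtain ⟨x, y, rfl⟩ := packV_surj v
    have h2 := h x y
    rw [← hLVnorm, ← packV_norm] at h2
    nlinarith [norm_nonneg (L (packV x y)), norm_nonneg (packV x y)]

end aux

set_option maxHeartbeats 1000000 in
/-- The block matrix `[[α₁ I_m, B],[0, α₂ I_n]]` is a contraction iff `|α₁| ≤ 1`,
`|α₂| ≤ 1` and `‖B‖² ≤ (1 − |α₁|²)(1 − |α₂|²)`. -/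
theorem stmt13 {m n : ℕ} (hm : 0 < m) (hn : 0 < n)
    (α₁ α₂ : ℂ) (B : Matrix (Fin m) (Fin n) ℂ) :
    opNorm (Matrix.fromBlocks (α₁ • (1 : Matrix (Fin m) (Fin m) ℂ)) B
        0 (α₂ • (1 : Matrix (Fin n) (Fin n) ℂ))) ≤ 1
      ↔ ‖α₁‖ ≤ 1 ∧ ‖α₂‖ ≤ 1 ∧
          opNorm B ^ 2 ≤ (1 - ‖α₁‖ ^ 2) * (1 - ‖α₂‖ ^ 2) := by
  classical
  have ha0 : (0:ℝ) ≤ ‖α₁‖ := norm_nonneg _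
  have hd0 : (0:ℝ) ≤ ‖α₂‖ := norm_nonneg _
  have hBc : ∀ y, (LinearMap.toContinuousLinearMap (Matrix.toEuclideanLin B)) y
      = Matrix.toEuclideanLin B y := fun _ => rfl
  have hBnorm : opNorm B = ‖LinearMap.toContinuousLinearMap (Matrix.toEuclideanLin B)‖ := rfl
  have hBop0 : (0:ℝ) ≤ opNorm B := by rw [hBnorm]; exact norm_nonneg _
  rw [norm_le_one_iff α₁ α₂ B]
  constructor
  · intro hQ
    have ha1 : ‖α₁‖ ≤ 1 := by
      have := hQ (EuclideanSpace.single ⟨0, hm⟩ 1) 0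
      simp only [map_zero, add_zero, norm_zero, norm_smul, EuclideanSpace.norm_single,
        norm_one, mul_one] at this
      nlinarith
    have hd1 : ‖α₂‖ ≤ 1 := by
      have := hQ 0 (EuclideanSpace.single ⟨0, hn⟩ 1)
      simp only [smul_zero, zero_add, norm_zero, EuclideanSpace.norm_single,
        norm_one, mul_one, one_pow] at this
      nlinarith [sq_nonneg ‖Matrix.toEuclideanLin B (EuclideanSpace.single ⟨0, hn⟩ 1)‖]
    refine ⟨ha1, hd1, ?_⟩
    have hy : ∀ y : EuclideanSpace ℂ (Fin n),
        ‖Matrix.toEuclideanLin B y‖^2 ≤ (1-‖α₁‖^2)*(1-‖α₂‖^2)*‖y‖^2 := by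
      intro y
      have h0 := hQ 0 y
      simp only [smul_zero, zero_add, norm_zero] at h0
      rcases eq_or_lt_of_le (norm_nonneg (Matrix.toEuclideanLin B y)) with hs0 | hs
      · rw [← hs0]
        have : (0:ℝ) ≤ (1-‖α₁‖^2)*(1-‖α₂‖^2)*‖y‖^2 :=
          mul_nonneg (mul_nonneg (by nlinarith) (by nlinarith)) (sq_nonneg _)
        nlinarith
      · rcases eq_or_lt_of_le ha0 with haz | hap
        · rw [← haz]
          nlinarith [h0]
        · have hQt : ∀ t : ℝ, 0 ≤ t →
              (t*‖α₁‖+‖Matrix.toEuclideanLin B y‖)^2 + ‖α₂‖^2*‖y‖^2 ≤ t^2 + ‖y‖^2 := by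
            intro t ht
            set s : ℝ := ‖Matrix.toEuclideanLin B y‖ with hsdef
            set c : ℂ := (t : ℂ) * (starRingEnd ℂ α₁) / ((‖α₁‖ : ℂ) * (s : ℂ)) with hc
            have hα₁ : ((‖α₁‖ : ℝ) : ℂ) ≠ 0 := by exact_mod_cast hap.ne'
            have habs : ‖α₁‖ ≠ 0 := by
              simpa using hap.ne'
            have hBy : ((s : ℝ) : ℂ) ≠ 0 := by exact_mod_cast hs.ne'
            have hα : α₁ * (starRingEnd ℂ) α₁ = ((‖α₁‖^2 : ℝ) : ℂ) := by
              rw [Complex.mul_conj]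
              norm_cast
              simp [Complex.normSq_eq_norm_sq]
            have hmc : α₁ * c + 1 = ((t * ‖α₁‖ / s + 1 : ℝ) : ℂ) := by
              have h1 : α₁ * c = ((t * ‖α₁‖^2 / (‖α₁‖ * s) : ℝ) : ℂ) := by
                rw [hc, mul_div_assoc', mul_left_comm, hα]
                push_cast
                ring
              have h1' : t * ‖α₁‖^2 / (‖α₁‖ * s) = t * ‖α₁‖ / s := by
                field_simp [hap.ne', hs.ne', habs]
              rw [h1, h1']
              push_cast
              ring
            have hcnorm : ‖c‖ = t / s := by
              rw [hc, norm_div, norm_mul, norm_mul, RCLike.norm_conj]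
              simp only [Complex.norm_real, Real.norm_eq_abs]
              rw [abs_of_nonneg ht, abs_of_nonneg (norm_nonneg α₁),
                abs_of_nonneg (by rw [hsdef]; exact norm_nonneg _)]
              field_simp [hap.ne', hs.ne', habs]
            have hthis := hQ (c • Matrix.toEuclideanLin B y) y
            have harg : α₁ • (c • Matrix.toEuclideanLin B y) + Matrix.toEuclideanLin B y
                = (α₁ * c + 1) • Matrix.toEuclideanLin B y := by
              rw [smul_smul]
              module
            have h1 : ‖α₁ • (c • Matrix.toEuclideanLin B y) + Matrix.toEuclideanLin B y‖
                = t*‖α₁‖ + s := by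
              rw [harg, norm_smul, hmc, Complex.norm_real, Real.norm_eq_abs,
                abs_of_nonneg (by positivity)]
              field_simp
              exact hsdef.symm
            have h2 : ‖c • Matrix.toEuclideanLin B y‖ = t := by
              rw [norm_smul, hcnorm, ← hsdef]
              field_simp
            rw [h1, h2] at hthis
            exact hthis
          rcases eq_or_lt_of_le ha1 with hae | half
          · rw [hae] at hQt ⊢
            exact aux_fwd_eq ‖α₂‖ ‖Matrix.toEuclideanLin B y‖ ‖y‖ hs (norm_nonneg _) hQt
          · exact aux_fwd_lt ‖α₁‖ ‖α₂‖ ‖Matrix.toEuclideanLin B y‖ ‖y‖ ha0 half hs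
              (norm_nonneg _) hQt
    have hP : (0:ℝ) ≤ (1-‖α₁‖^2)*(1-‖α₂‖^2) :=
      mul_nonneg (by nlinarith) (by nlinarith)
    have hle : opNorm B ≤ Real.sqrt ((1-‖α₁‖^2)*(1-‖α₂‖^2)) := by
      rw [hBnorm]
      refine ContinuousLinearMap.opNorm_le_bound _ (Real.sqrt_nonneg _) (fun y => ?_)
      have h1 : Real.sqrt (‖Matrix.toEuclideanLin B y‖^2)
          ≤ Real.sqrt ((1-‖α₁‖^2)*(1-‖α₂‖^2)*‖y‖^2) := Real.sqrt_le_sqrt (hy y)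
      rw [Real.sqrt_sq (norm_nonneg _), Real.sqrt_mul hP, Real.sqrt_sq (norm_nonneg y)] at h1
      rw [hBc]
      exact h1
    calc opNorm B ^ 2 ≤ Real.sqrt ((1-‖α₁‖^2)*(1-‖α₂‖^2)) ^ 2 :=
          pow_le_pow_left₀ hBop0 hle 2
      _ = (1-‖α₁‖^2)*(1-‖α₂‖^2) := Real.sq_sqrt hP
  · rintro ⟨ha1, hd1, hB⟩ x y
    have hBy : ‖Matrix.toEuclideanLin B y‖ ≤ opNorm B * ‖y‖ := by
      rw [hBnorm, ← hBc y]
      exact (LinearMap.toContinuousLinearMap (Matrix.toEuclideanLin B)).le_opNorm y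
    have htri : ‖α₁ • x + Matrix.toEuclideanLin B y‖ ≤ ‖α₁‖*‖x‖ + opNorm B*‖y‖ := by
      calc ‖α₁ • x + Matrix.toEuclideanLin B y‖
          ≤ ‖α₁ • x‖ + ‖Matrix.toEuclideanLin B y‖ := norm_add_le _ _
        _ ≤ ‖α₁‖*‖x‖ + opNorm B*‖y‖ := by rw [norm_smul]; gcongr
    have hkey := aux_back ‖α₁‖ ‖α₂‖ (opNorm B) ‖x‖ ‖y‖ ha0 ha1 hd0 hd1 hBop0
      (norm_nonneg x) (norm_nonneg y) hB
    have h2 : ‖α₁ • x + Matrix.toEuclideanLin B y‖^2 ≤ (‖α₁‖*‖x‖ + opNorm B*‖y‖)^2 :=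
      pow_le_pow_left₀ (norm_nonneg _) htri 2
    nlinarith
end

section
/- Let b ≥ 0 be real, c, d₂ ∈ ℂ, and let v₁ = (v₁₁, v₁₂), v₂ = (v₂₁, v₂₂) ∈ ℂ² be linearly independent. Set V₁ = [[v₁₁, v₁₂],[0, 0]], V₂ = [[v₂₁, v₂₂],[0, 0]], V₃ = V₁ + V₂ (2×2 matrices). Then the operator norms of the 4×4 block matrices M = [[V₃, b·V₂],[c·V₂, d₂·V₁]] and M′ = [[V₃, c·V₂],[b·V₂, d₂·V₁]] are equal if and only if |d₂| = 1 or b = |c|. (Here M = P_A^{(2)}(V) and M′ = P_{Aᵗ}^{(2)}(V) for A₁ = [[1,0],[0,d₂]], A₂ = [[1,b],[c,0]].) -/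
open scoped Kronecker
open scoped ComplexConjugate Matrix

lemma opNorm_conjTranspose {m n : Type*} [Fintype m] [Fintype n] [DecidableEq m] [DecidableEq n]
    (M : Matrix m n ℂ) : opNorm Mᴴ = opNorm M := by
  unfold opNorm
  rw [Matrix.toEuclideanLin_conjTranspose_eq_adjoint, LinearMap.adjoint_toContinuousLinearMap]
  exact ContinuousLinearMap.adjoint.norm_map _

lemma opNorm_congr {m m' n : Type*} [Fintype m] [Fintype m'] [Fintype n] [DecidableEq n]
    (M : Matrix m n ℂ) (N : Matrix m' n ℂ)
    (h : ∀ x : EuclideanSpace ℂ n, ‖Matrix.toEuclideanLin M x‖ = ‖Matrix.toEuclideanLin N x‖) :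
    opNorm M = opNorm N := by
  unfold opNorm
  apply le_antisymm
  · apply ContinuousLinearMap.opNorm_le_bound _ (norm_nonneg _)
    intro x
    simp only [LinearMap.coe_toContinuousLinearMap']
    rw [h x]
    exact (LinearMap.toContinuousLinearMap (Matrix.toEuclideanLin N)).le_opNorm x
  · apply ContinuousLinearMap.opNorm_le_bound _ (norm_nonneg _)
    intro x
    simp only [LinearMap.coe_toContinuousLinearMap']
    rw [← h x]
    exact (LinearMap.toContinuousLinearMap (Matrix.toEuclideanLin M)).le_opNorm x

noncomputable def lamF (α γ : ℝ) (β : ℂ) : ℝ :=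
  (α + γ + Real.sqrt ((α - γ) ^ 2 + 4 * Complex.normSq β)) / 2

lemma lamF_facts (α γ : ℝ) (β : ℂ) :
    α ≤ lamF α γ β ∧ γ ≤ lamF α γ β ∧
      (lamF α γ β - α) * (lamF α γ β - γ) = Complex.normSq β := by
  have hE : (0:ℝ) ≤ (α - γ) ^ 2 + 4 * Complex.normSq β := by
    nlinarith [Complex.normSq_nonneg β, sq_nonneg (α - γ)]
  have hD := Real.sq_sqrt hE
  set D := Real.sqrt ((α - γ) ^ 2 + 4 * Complex.normSq β) with hDdef
  have hD0 : 0 ≤ D := Real.sqrt_nonneg _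
  have h1 : |α - γ| ≤ D := by
    rw [← Real.sqrt_sq_eq_abs]
    apply Real.sqrt_le_sqrt
    nlinarith [Complex.normSq_nonneg β]
  have h2 : α - γ ≤ D := le_trans (le_abs_self _) h1
  have h3 : γ - α ≤ D := le_trans (by rw [abs_sub_comm]; exact le_abs_self _) h1
  refine ⟨by unfold lamF; simp only [← hDdef]; linarith,
    by unfold lamF; simp only [← hDdef]; linarith, ?_⟩
  unfold lamF
  simp only [← hDdef]
  nlinarith [hD]

lemma Q_le (α γ lam : ℝ) (β z0 z1 : ℂ) (hα : α ≤ lam) (hγ : γ ≤ lam)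
    (hprod : (lam - α) * (lam - γ) = Complex.normSq β) :
    α * Complex.normSq z0 + γ * Complex.normSq z1
        + 2 * ((conj β) * z0 * (conj z1)).re
      ≤ lam * (Complex.normSq z0 + Complex.normSq z1) := by
  set a := ‖z0‖ with ha
  set e := ‖z1‖ with he
  have ha0 : 0 ≤ a := norm_nonneg _
  have he0 : 0 ≤ e := norm_nonneg _
  have hn0 : Complex.normSq z0 = a ^ 2 := (Complex.sq_norm z0).symm
  have hn1 : Complex.normSq z1 = e ^ 2 := (Complex.sq_norm z1).symm
  have habs : ‖β‖ = Real.sqrt (lam - α) * Real.sqrt (lam - γ) := by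
    rw [Complex.norm_def, ← hprod, Real.sqrt_mul (by linarith)]
  have hre : ((conj β) * z0 * (conj z1)).re ≤ ‖β‖ * a * e := by
    calc ((conj β) * z0 * (conj z1)).re ≤ ‖(conj β) * z0 * (conj z1)‖ :=
          Complex.re_le_norm _
      _ = ‖β‖ * a * e := by
          simp [norm_mul, Complex.norm_conj, ha, he]
  have hs1 : Real.sqrt (lam - α) ^ 2 = lam - α := Real.sq_sqrt (by linarith)
  have hs2 : Real.sqrt (lam - γ) ^ 2 = lam - γ := Real.sq_sqrt (by linarith)
  rw [habs] at hre
  rw [hn0, hn1]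
  nlinarith [sq_nonneg (Real.sqrt (lam - α) * a - Real.sqrt (lam - γ) * e),
    Real.sqrt_nonneg (lam - α), Real.sqrt_nonneg (lam - γ), hre]

lemma euclidean_norm_sq_two (z : EuclideanSpace ℂ (Fin 2)) :
    ‖z‖ ^ 2 = Complex.normSq (z 0) + Complex.normSq (z 1) := by
  rw [EuclideanSpace.norm_eq, Real.sq_sqrt (by positivity)]
  simp [Fin.sum_univ_two, Complex.sq_norm]

lemma opNorm_two_rows (r1 r2 : Fin 2 ⊕ Fin 2 → ℂ)
    (M : Matrix (Fin 2 ⊕ Fin 2) (Fin 2 ⊕ Fin 2) ℂ)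
    (h1 : ∀ j, M (Sum.inl 0) j = r1 j) (h2 : ∀ j, M (Sum.inr 0) j = r2 j)
    (h3 : ∀ j, M (Sum.inl 1) j = 0) (h4 : ∀ j, M (Sum.inr 1) j = 0) :
    opNorm M = Real.sqrt (lamF (∑ j, Complex.normSq (r1 j)) (∑ j, Complex.normSq (r2 j))
      (∑ j, r1 j * conj (r2 j))) := by
  set α := ∑ j, Complex.normSq (r1 j) with hαdef
  set γ := ∑ j, Complex.normSq (r2 j) with hγdef
  set β := ∑ j, r1 j * conj (r2 j) with hβdef
  set W : Matrix (Fin 2) (Fin 2 ⊕ Fin 2) ℂ :=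
    Matrix.of (fun t j => if t = 0 then r1 j else r2 j) with hWdef
  have stepA : opNorm M = opNorm W := by
    apply opNorm_congr
    intro x
    rw [EuclideanSpace.norm_eq, EuclideanSpace.norm_eq]
    congr 1
    simp only [Matrix.toEuclideanLin_apply, WithLp.ofLp_toLp,
      Matrix.mulVec, dotProduct, Fintype.sum_sum_type, Fin.sum_univ_two,
      h1, h2, h3, h4, hWdef, Matrix.of_apply]
    norm_num
  rw [stepA, ← opNorm_conjTranspose W]
  -- now compute opNorm Wᴴ
  have hQ : ∀ z : EuclideanSpace ℂ (Fin 2),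
      ‖Matrix.toEuclideanLin Wᴴ z‖ ^ 2
        = α * Complex.normSq (z 0) + γ * Complex.normSq (z 1)
          + 2 * ((conj β) * (z 0) * (conj (z 1))).re := by
    intro z
    rw [EuclideanSpace.norm_eq, Real.sq_sqrt (by positivity)]
    simp only [Matrix.toEuclideanLin_apply, WithLp.ofLp_toLp,
      Matrix.mulVec, dotProduct, Fintype.sum_sum_type, Fin.sum_univ_two,
      Matrix.conjTranspose_apply, hWdef, Matrix.of_apply, hαdef, hγdef, hβdef,
      Complex.sq_norm]
    norm_num
    simp only [Complex.normSq_apply, Complex.add_re, Complex.add_im, Complex.mul_re,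
      Complex.mul_im, Complex.conj_re, Complex.conj_im, map_sum, Complex.re_sum]
    ring
  obtain ⟨hα, hγ, hprod⟩ := lamF_facts α γ β
  set lam := lamF α γ β with hlamdef
  have hα0 : 0 ≤ α := Finset.sum_nonneg fun j _ => Complex.normSq_nonneg _
  have hlam0 : 0 ≤ lam := le_trans hα0 hα
  unfold opNorm
  apply ContinuousLinearMap.opNorm_eq_of_bounds (Real.sqrt_nonneg _)
  · intro z
    simp only [LinearMap.coe_toContinuousLinearMap']
    have hb : ‖Matrix.toEuclideanLin Wᴴ z‖ ^ 2 ≤ lam * ‖z‖ ^ 2 := by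
      rw [hQ z, euclidean_norm_sq_two z]
      exact Q_le α γ lam β (z 0) (z 1) hα hγ hprod
    calc ‖Matrix.toEuclideanLin Wᴴ z‖
        = Real.sqrt (‖Matrix.toEuclideanLin Wᴴ z‖ ^ 2) := (Real.sqrt_sq (norm_nonneg _)).symm
      _ ≤ Real.sqrt (lam * ‖z‖ ^ 2) := Real.sqrt_le_sqrt hb
      _ = Real.sqrt lam * ‖z‖ := by
          rw [Real.sqrt_mul hlam0, Real.sqrt_sq (norm_nonneg _)]
  · intro N hN hbound
    -- eigenvector
    obtain ⟨z0, z1, hz, hQz⟩ : ∃ z0 z1 : ℂ, (Complex.normSq z0 + Complex.normSq z1 > 0) ∧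
        α * Complex.normSq z0 + γ * Complex.normSq z1 + 2 * ((conj β) * z0 * (conj z1)).re
          = lam * (Complex.normSq z0 + Complex.normSq z1) := by
      by_cases hc : β = 0 ∧ lam = α
      · refine ⟨1, 0, by norm_num, ?_⟩
        simp [hc.2]
      · refine ⟨β, ((lam - α : ℝ) : ℂ), ?_, ?_⟩
        · rcases (not_and_or.mp hc) with h | h
          · have : 0 < Complex.normSq β := Complex.normSq_pos.mpr h
            nlinarith [Complex.normSq_nonneg ((lam - α : ℝ) : ℂ)]
          · have hne : lam - α ≠ 0 := by
              intro h0; exact h (by linarith [sub_eq_zero.mp h0])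
            have : 0 < Complex.normSq ((lam - α : ℝ) : ℂ) := by
              rw [Complex.normSq_ofReal]
              exact mul_self_pos.mpr hne
            nlinarith [Complex.normSq_nonneg β]
        · rw [Complex.normSq_ofReal, Complex.conj_ofReal]
          have hcb : (conj β) * β * ((lam - α : ℝ) : ℂ)
              = ((Complex.normSq β * (lam - α) : ℝ) : ℂ) := by
            rw [mul_comm (conj β) β, Complex.mul_conj]
            push_cast
            ring
          rw [hcb, Complex.ofReal_re]
          linear_combination (α - lam) * hprod
    set z : EuclideanSpace ℂ (Fin 2) := (WithLp.equiv 2 (Fin 2 → ℂ)).symm ![z0, z1] with hzdef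
    have hz0 : z 0 = z0 := rfl
    have hz1 : z 1 = z1 := rfl
    have hnz : ‖z‖ ^ 2 = Complex.normSq z0 + Complex.normSq z1 := by
      rw [euclidean_norm_sq_two, hz0, hz1]
    have hzpos : 0 < ‖z‖ := by
      have h2 : 0 < ‖z‖ ^ 2 := by rw [hnz]; exact hz
      nlinarith [norm_nonneg z]
    have hTz : ‖Matrix.toEuclideanLin Wᴴ z‖ = Real.sqrt lam * ‖z‖ := by
      have : ‖Matrix.toEuclideanLin Wᴴ z‖ ^ 2 = lam * ‖z‖ ^ 2 := by
        rw [hQ z, hz0, hz1, hnz, hQz]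
      calc ‖Matrix.toEuclideanLin Wᴴ z‖
          = Real.sqrt (‖Matrix.toEuclideanLin Wᴴ z‖ ^ 2) := (Real.sqrt_sq (norm_nonneg _)).symm
        _ = Real.sqrt (lam * ‖z‖ ^ 2) := by rw [this]
        _ = Real.sqrt lam * ‖z‖ := by
            rw [Real.sqrt_mul hlam0, Real.sqrt_sq (norm_nonneg _)]
    have := hbound z
    simp only [LinearMap.coe_toContinuousLinearMap'] at this
    rw [hTz] at this
    exact le_of_mul_le_mul_right this hzpos

lemma iff_core (b : ℝ) (hb : 0 ≤ b) (c d2 dv : ℂ) (hdv : dv ≠ 0)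
    (A1 G1 A2 G2 : ℝ) (B1 B2 : ℂ)
    (hA1 : 0 ≤ A1) (hA2 : 0 ≤ A2)
    (ht : A1 + G1 = A2 + G2)
    (key : (A1 - G1) ^ 2 + 4 * Complex.normSq B1
        - ((A2 - G2) ^ 2 + 4 * Complex.normSq B2)
      = 4 * (Complex.normSq c - b ^ 2) * (Complex.normSq d2 - 1) * Complex.normSq dv) :
    (Real.sqrt (lamF A1 G1 B1) = Real.sqrt (lamF A2 G2 B2)) ↔ (‖d2‖ = 1 ∨ b = ‖c‖) := by
  obtain ⟨h1a, h1g, h1p⟩ := lamF_facts A1 G1 B1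
  obtain ⟨h2a, h2g, h2p⟩ := lamF_facts A2 G2 B2
  rw [Real.sqrt_inj (le_trans hA1 h1a) (le_trans hA2 h2a)]
  have hE1 : (0:ℝ) ≤ (A1 - G1) ^ 2 + 4 * Complex.normSq B1 := by
    nlinarith [Complex.normSq_nonneg B1, sq_nonneg (A1 - G1)]
  have hE2 : (0:ℝ) ≤ (A2 - G2) ^ 2 + 4 * Complex.normSq B2 := by
    nlinarith [Complex.normSq_nonneg B2, sq_nonneg (A2 - G2)]
  have step1 : lamF A1 G1 B1 = lamF A2 G2 B2
      ↔ (A1 - G1) ^ 2 + 4 * Complex.normSq B1 = (A2 - G2) ^ 2 + 4 * Complex.normSq B2 := by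
    unfold lamF
    constructor
    · intro h
      have hD : Real.sqrt ((A1 - G1) ^ 2 + 4 * Complex.normSq B1)
          = Real.sqrt ((A2 - G2) ^ 2 + 4 * Complex.normSq B2) := by linarith
      rw [← Real.sq_sqrt hE1, ← Real.sq_sqrt hE2, hD]
    · intro h
      rw [h]
      linarith
  rw [step1]
  have hdv2 : 0 < Complex.normSq dv := Complex.normSq_pos.mpr hdv
  constructor
  · intro h
    have h4 : 4 * (Complex.normSq c - b ^ 2) * (Complex.normSq d2 - 1) * Complex.normSq dv
        = 0 := by linarith
    have h5 : Complex.normSq c - b ^ 2 = 0 ∨ Complex.normSq d2 - 1 = 0 := by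
      rcases mul_eq_zero.mp h4 with h6 | h6
      · rcases mul_eq_zero.mp h6 with h7 | h7
        · rcases mul_eq_zero.mp h7 with h8 | h8
          · norm_num at h8
          · exact Or.inl h8
        · exact Or.inr h7
      · exact absurd h6 (ne_of_gt hdv2)
    rcases h5 with h | h
    · right
      have hbc : ‖c‖ ^ 2 = b ^ 2 := by
        rw [Complex.sq_norm]; linarith
      nlinarith [norm_nonneg c]
    · left
      have hd : ‖d2‖ ^ 2 = 1 := by
        rw [Complex.sq_norm]; linarith
      nlinarith [norm_nonneg d2]
  · intro h
    have h0 : (Complex.normSq c - b ^ 2) * (Complex.normSq d2 - 1) = 0 := by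
      rcases h with h | h
      · have hd : Complex.normSq d2 = 1 := by
          rw [Complex.normSq_eq_norm_sq, h]; norm_num
        rw [hd]; ring
      · have hc : Complex.normSq c = b ^ 2 := by
          rw [Complex.normSq_eq_norm_sq, ← h]
        rw [hc]; ring
    linear_combination key + 4 * Complex.normSq dv * h0


/-- For linearly independent `v₁, v₂ ∈ ℂ²`, `V₁, V₂` the 2×2 matrices with first rows
`v₁, v₂` and zero second rows, `V₃ = V₁ + V₂`, the 4×4 block matrices
`M = [[V₃, bV₂],[cV₂, d₂V₁]]` and `M′ = [[V₃, cV₂],[bV₂, d₂V₁]]` have equal operator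
norms iff `|d₂| = 1` or `b = |c|`. -/
theorem stmt14 (b : ℝ) (hb : 0 ≤ b) (c d2 : ℂ)
    (v1 v2 : Fin 2 → ℂ) (hli : LinearIndependent ℂ ![v1, v2])
    (V1 V2 V3 : Matrix (Fin 2) (Fin 2) ℂ)
    (hV1 : V1 = !![v1 0, v1 1; 0, 0])
    (hV2 : V2 = !![v2 0, v2 1; 0, 0])
    (hV3 : V3 = V1 + V2) :
    opNorm (Matrix.fromBlocks V3 ((b : ℂ) • V2) (c • V2) (d2 • V1))
        = opNorm (Matrix.fromBlocks V3 (c • V2) ((b : ℂ) • V2) (d2 • V1))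
      ↔ ‖d2‖ = 1 ∨ b = ‖c‖ := by
  classical
  -- the determinant is nonzero
  have hp := linearIndependent_fin2.mp hli
  have hv2 : v2 ≠ 0 := by simpa using hp.1
  have hsm : ∀ a : ℂ, a • v2 ≠ v1 := by
    intro a
    simpa using hp.2 a
  have hdv : v1 0 * v2 1 - v1 1 * v2 0 ≠ 0 := by
    intro h0
    rw [sub_eq_zero] at h0
    by_cases hq1 : v2 0 = 0
    · have hq2 : v2 1 ≠ 0 := by
        intro hq2
        apply hv2
        funext j; fin_cases j <;> simp [hq1, hq2]
      have hp1 : v1 0 = 0 := by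
        have h1 : v1 0 * v2 1 = 0 := by rw [h0, hq1]; ring
        exact (mul_eq_zero.mp h1).resolve_right hq2
      apply hsm (v1 1 / v2 1)
      funext j; fin_cases j <;>
        simp [Pi.smul_apply, smul_eq_mul, hq1, hp1] <;> field_simp
    · apply hsm (v1 0 / v2 0)
      funext j; fin_cases j
      · simp only [Pi.smul_apply, smul_eq_mul, Fin.zero_eta, Fin.mk_one]
        exact div_mul_cancel₀ _ hq1
      · simp only [Pi.smul_apply, smul_eq_mul, Fin.zero_eta, Fin.mk_one]
        rw [div_mul_eq_mul_div, h0, mul_div_cancel_right₀ _ hq1]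
  have e1 : opNorm (Matrix.fromBlocks V3 ((b : ℂ) • V2) (c • V2) (d2 • V1))
      = Real.sqrt (lamF
        (∑ j, Complex.normSq ((Sum.elim (fun j => v1 j + v2 j) (fun j => (b:ℂ) * v2 j)) j))
        (∑ j, Complex.normSq ((Sum.elim (fun j => c * v2 j) (fun j => d2 * v1 j)) j))
        (∑ j, (Sum.elim (fun j => v1 j + v2 j) (fun j => (b:ℂ) * v2 j)) j
            * conj ((Sum.elim (fun j => c * v2 j) (fun j => d2 * v1 j)) j))) := by
    apply opNorm_two_rows <;> rintro (j | j) <;> fin_cases j <;>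
      simp [hV1, hV2, hV3]
  have e2 : opNorm (Matrix.fromBlocks V3 (c • V2) ((b : ℂ) • V2) (d2 • V1))
      = Real.sqrt (lamF
        (∑ j, Complex.normSq ((Sum.elim (fun j => v1 j + v2 j) (fun j => c * v2 j)) j))
        (∑ j, Complex.normSq ((Sum.elim (fun j => (b:ℂ) * v2 j) (fun j => d2 * v1 j)) j))
        (∑ j, (Sum.elim (fun j => v1 j + v2 j) (fun j => c * v2 j)) j
            * conj ((Sum.elim (fun j => (b:ℂ) * v2 j) (fun j => d2 * v1 j)) j))) := by
    apply opNorm_two_rows <;> rintro (j | j) <;> fin_cases j <;>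
      simp [hV1, hV2, hV3]
  rw [e1, e2]
  apply iff_core b hb c d2 _ hdv
  · exact Finset.sum_nonneg fun j _ => Complex.normSq_nonneg _
  · exact Finset.sum_nonneg fun j _ => Complex.normSq_nonneg _
  · simp only [Fintype.sum_sum_type, Fin.sum_univ_two, Sum.elim_inl, Sum.elim_inr]
    simp only [Complex.normSq_apply, Complex.add_re, Complex.add_im, Complex.mul_re,
      Complex.mul_im, Complex.sub_re, Complex.sub_im, Complex.conj_re, Complex.conj_im,
      Complex.ofReal_re, Complex.ofReal_im]
    ring
  · simp only [Fintype.sum_sum_type, Fin.sum_univ_two, Sum.elim_inl, Sum.elim_inr]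
    simp only [map_sum, map_mul, map_add, Complex.normSq_apply, Complex.add_re,
      Complex.add_im, Complex.mul_re, Complex.mul_im, Complex.sub_re, Complex.sub_im,
      Complex.conj_re, Complex.conj_im, Complex.ofReal_re, Complex.ofReal_im]
    ring
end

section
/- Let α₁, α₂ ∈ ℂ, let V₁, V₂ be k×k complex matrices, and let B be a nonzero m×n complex matrix. Then the operator norm of the block matrix [[α₁·(V₁ ⊗ I_m), V₂ ⊗ B],[0, α₂·(V₁ ⊗ I_n)]] equals the operator norm of the 2k×2k block matrix [[α₁·V₁, ‖B‖_op·V₂],[0, α₂·V₁]]; in particular it depends on B only through its operator norm. (Consequently, the operator space structure induced on the normed space V_A, A = (diag(α₁,α₂), β·E₁₂), by an embedding using any B with ‖B‖_op = |β| is independent of the choice of B.) -/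
open scoped Kronecker Matrix.Norms.L2Operator

namespace Stmt15
open Matrix
variable {ι κ : Type*} [Fintype ι] [Fintype κ]

lemma opNorm_eq {ι κ : Type*} [Fintype ι] [Fintype κ] [DecidableEq κ] (M : Matrix ι κ ℂ) :
    opNorm M = ‖M‖ := rfl

noncomputable def sqn (v : ι → ℂ) : ℝ := ∑ i, ‖v i‖ ^ 2

lemma sqn_nonneg (v : ι → ℂ) : 0 ≤ sqn v :=
  Finset.sum_nonneg fun _ _ => sq_nonneg _

lemma norm_euclidean (x : EuclideanSpace ℂ ι) : ‖x‖ = Real.sqrt (sqn (fun i => x i)) := by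
  rw [EuclideanSpace.norm_eq]; rfl

lemma norm_le_of_sqn {M : Matrix ι κ ℂ} [DecidableEq κ] {C : ℝ} (hC : 0 ≤ C)
    (h : ∀ v : κ → ℂ, sqn (M *ᵥ v) ≤ C ^ 2 * sqn v) : ‖M‖ ≤ C := by
  rw [Matrix.l2_opNorm_def]
  refine ContinuousLinearMap.opNorm_le_bound _ hC fun x => ?_
  have hx : (LinearMap.toContinuousLinearMap (Matrix.toEuclideanLin M)) x
      = (WithLp.equiv 2 (ι → ℂ)).symm (M *ᵥ (WithLp.equiv 2 (κ → ℂ)) x) := rfl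
  rw [norm_euclidean, norm_euclidean]
  show Real.sqrt (sqn (M *ᵥ fun j => x j)) ≤ C * Real.sqrt (sqn fun j => x j)
  calc Real.sqrt (sqn (M *ᵥ fun j => x j))
      ≤ Real.sqrt (C ^ 2 * sqn fun j => x j) := Real.sqrt_le_sqrt (h _)
    _ = C * Real.sqrt (sqn fun j => x j) := by
        rw [Real.sqrt_mul (sq_nonneg C), Real.sqrt_sq hC]

lemma sqn_mulVec_le (M : Matrix ι κ ℂ) [DecidableEq κ] (v : κ → ℂ) :
    sqn (M *ᵥ v) ≤ ‖M‖ ^ 2 * sqn v := by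
  have h2 : Real.sqrt (sqn (M *ᵥ v)) ≤ ‖M‖ * Real.sqrt (sqn v) := by
    have := Matrix.l2_opNorm_mulVec M ((WithLp.equiv 2 (κ → ℂ)).symm v)
    rw [norm_euclidean, norm_euclidean] at this
    exact this
  nlinarith [Real.sq_sqrt (sqn_nonneg (M *ᵥ v)), Real.sq_sqrt (sqn_nonneg v),
    Real.sqrt_nonneg (sqn (M *ᵥ v)), Real.sqrt_nonneg (sqn v), norm_nonneg M]


lemma sqn_sum (v : ι ⊕ κ → ℂ) : sqn v = sqn (v ∘ Sum.inl) + sqn (v ∘ Sum.inr) :=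
  Fintype.sum_sum_type _

lemma sqn_prod (v : ι × κ → ℂ) : sqn v = ∑ j : κ, sqn (fun a => v (a, j)) := by
  rw [sqn, Fintype.sum_prod_type]
  exact Finset.sum_comm

lemma sqn_eq_re_dot (v : ι → ℂ) : sqn v = (dotProduct (star v) v).re := by
  rw [dotProduct, Complex.re_sum, sqn]
  refine Finset.sum_congr rfl fun i _ => ?_
  rw [Pi.star_apply, show (star (v i) * v i) = (Complex.normSq (v i) : ℂ) by
    rw [Complex.star_def, mul_comm, Complex.mul_conj]]
  rw [Complex.ofReal_re, Complex.normSq_eq_norm_sq]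

lemma sqn_mulVec_of_unitary {U : Matrix ι ι ℂ} [DecidableEq ι] (hU : Uᴴ * U = 1) (v : ι → ℂ) :
    sqn (U *ᵥ v) = sqn v := by
  rw [sqn_eq_re_dot, sqn_eq_re_dot]
  congr 1
  rw [Matrix.star_mulVec, dotProduct_mulVec, Matrix.vecMul_vecMul, hU,
    Matrix.vecMul_one]

lemma norm_unitary_le {U : Matrix ι ι ℂ} [DecidableEq ι] (hU : Uᴴ * U = 1) : ‖U‖ ≤ 1 := by
  refine norm_le_of_sqn zero_le_one fun v => ?_
  rw [sqn_mulVec_of_unitary hU]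
  nlinarith [sqn_nonneg v]

lemma norm_triple_le [DecidableEq ι] {U W : Matrix ι ι ℂ} (hU : ‖U‖ ≤ 1) (hW : ‖W‖ ≤ 1) (X : Matrix ι ι ℂ) :
    ‖U * X * W‖ ≤ ‖X‖ := by
  calc ‖U * X * W‖ ≤ ‖U * X‖ * ‖W‖ := Matrix.l2_opNorm_mul _ _
    _ ≤ (‖U‖ * ‖X‖) * ‖W‖ :=
        mul_le_mul_of_nonneg_right (Matrix.l2_opNorm_mul _ _) (norm_nonneg _)
    _ ≤ ‖X‖ := by
        have h1 : ‖U‖ * ‖X‖ ≤ ‖X‖ := by nlinarith [norm_nonneg U, norm_nonneg X]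
        have h2 : ‖U‖ * ‖X‖ * ‖W‖ ≤ ‖U‖ * ‖X‖ := by
          nlinarith [mul_nonneg (norm_nonneg U) (norm_nonneg X)]
        linarith

lemma norm_conj_unitary {U : Matrix ι ι ℂ} [DecidableEq ι]
    (h1 : Uᴴ * U = 1) (h2 : U * Uᴴ = 1) (X : Matrix ι ι ℂ) :
    ‖U * X * Uᴴ‖ = ‖X‖ := by
  have hUle : ‖U‖ ≤ 1 := norm_unitary_le h1
  have hUHle : ‖Uᴴ‖ ≤ 1 := norm_unitary_le (by rwa [Matrix.conjTranspose_conjTranspose])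
  refine le_antisymm (norm_triple_le hUle hUHle X) ?_
  have hX : X = Uᴴ * (U * X * Uᴴ) * U := by
    rw [show Uᴴ * (U * X * Uᴴ) * U = (Uᴴ * U) * X * (Uᴴ * U) by noncomm_ring, h1]
    simp
  conv_lhs => rw [hX]
  exact norm_triple_le hUHle hUle (U * X * Uᴴ)

lemma kronecker_conjTranspose {k : Type*} [Fintype k] (A : Matrix k k ℂ) (B : Matrix ι κ ℂ) :
    (A ⊗ₖ B)ᴴ = Aᴴ ⊗ₖ Bᴴ := by
  ext ⟨a, i⟩ ⟨b, j⟩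
  simp [Matrix.conjTranspose_apply, Matrix.kroneckerMap_apply, mul_comm]

lemma exists_attain (M : Matrix ι κ ℂ) [DecidableEq κ] [Nonempty κ] :
    ∃ u : κ → ℂ, sqn u = 1 ∧ sqn (M *ᵥ u) = ‖M‖ ^ 2 := by
  classical
  have hnt : Nontrivial (EuclideanSpace ℂ κ) := by
    refine ⟨EuclideanSpace.single (Classical.arbitrary κ) (1 : ℂ), 0, fun h => ?_⟩
    have := congrArg (fun f : EuclideanSpace ℂ κ => f (Classical.arbitrary κ)) h
    simp [EuclideanSpace.single_apply] at this
  set T : EuclideanSpace ℂ κ →L[ℂ] EuclideanSpace ℂ ι :=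
    (Matrix.toEuclideanLin.trans LinearMap.toContinuousLinearMap) M with hT
  have hs : IsCompact (Metric.sphere (0 : EuclideanSpace ℂ κ) 1) := isCompact_sphere 0 1
  have hne : (Metric.sphere (0 : EuclideanSpace ℂ κ) 1).Nonempty :=
    NormedSpace.sphere_nonempty.mpr zero_le_one
  obtain ⟨x₀, hx₀mem, hmax⟩ := hs.exists_isMaxOn hne (T.continuous.norm.continuousOn)
  have hx₀ : ‖x₀‖ = 1 := mem_sphere_zero_iff_norm.mp hx₀mem
  have hTnorm : ‖T‖ = ‖T x₀‖ := by
    refine le_antisymm ?_ ?_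
    · refine T.opNorm_le_bound (norm_nonneg _) fun y => ?_
      rcases eq_or_ne y 0 with rfl | hy
      · simp
      · have hyn : ‖y‖ ≠ 0 := norm_ne_zero_iff.mpr hy
        set z : EuclideanSpace ℂ κ := ((‖y‖⁻¹ : ℝ) : ℂ) • y with hz
        have hzs : z ∈ Metric.sphere (0 : EuclideanSpace ℂ κ) 1 := by
          simp only [mem_sphere_zero_iff_norm, hz, norm_smul]
          simp [norm_inv, inv_mul_cancel₀ hyn]
        have h1 : ‖T z‖ ≤ ‖T x₀‖ := hmax hzs
        have h2 : T z = ((‖y‖⁻¹ : ℝ) : ℂ) • T y := by rw [hz]; exact T.map_smul _ _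
        rw [h2, norm_smul] at h1
        have : ‖((‖y‖⁻¹ : ℝ) : ℂ)‖ = ‖y‖⁻¹ := by
          simp [abs_of_nonneg (inv_nonneg.mpr (norm_nonneg y))]
        rw [this] at h1
        have := mul_le_mul_of_nonneg_right h1 (norm_nonneg y)
        rwa [mul_comm (‖y‖⁻¹) _, mul_assoc, inv_mul_cancel₀ hyn, mul_one,
          mul_comm ‖T x₀‖ ‖y‖, mul_comm] at this
    · have := T.le_opNorm x₀
      rwa [hx₀, mul_one] at this
  refine ⟨fun j => x₀ j, ?_, ?_⟩
  · have h1 : Real.sqrt (sqn fun j => x₀ j) = 1 := (norm_euclidean x₀).symm.trans hx₀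
    have := congrArg (fun t => t ^ 2) h1
    simpa [Real.sq_sqrt (sqn_nonneg fun j => x₀ j)] using this
  · have h2 : ‖T x₀‖ = Real.sqrt (sqn (M *ᵥ fun j => x₀ j)) := norm_euclidean (T x₀)
    have h3 : ‖M‖ = ‖T x₀‖ := by rw [Matrix.l2_opNorm_def, ← hT, hTnorm]
    rw [h3, h2, Real.sq_sqrt (sqn_nonneg _)]


lemma sqn_zero : sqn (fun _ : ι => (0:ℂ)) = 0 := by simp [sqn]

lemma sqn_const_mul (c : ℂ) (w : ι → ℂ) :
    sqn (fun i => c * w i) = ‖c‖ ^ 2 * sqn w := by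
  simp [sqn, mul_pow, Finset.mul_sum]

lemma sqn_tensor (x : ι → ℂ) (v : κ → ℂ) :
    sqn (fun p : ι × κ => x p.1 * v p.2) = sqn x * sqn v := by
  rw [sqn, Fintype.sum_prod_type, sqn, sqn, Finset.sum_mul_sum]
  simp [mul_pow]

section Kron
variable {K N : Type*} [Fintype K] [Fintype N] [DecidableEq N]

lemma kron_mulVec (V : Matrix K K ℂ) (B : Matrix ι κ ℂ) (η : K × κ → ℂ) (a : K) (i : ι) :
    ((V ⊗ₖ B) *ᵥ η) (a, i) = ∑ b : K, V a b * ((B *ᵥ fun j => η (b, j)) i) := by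
  rw [Matrix.mulVec, dotProduct, Fintype.sum_prod_type]
  refine Finset.sum_congr rfl fun b _ => ?_
  rw [Matrix.mulVec, dotProduct, Finset.mul_sum]
  refine Finset.sum_congr rfl fun j _ => ?_
  simp [Matrix.kroneckerMap_apply]
  ring

lemma kron_one_mulVec (V : Matrix K K ℂ) (ξ : K × N → ℂ) (a : K) (i : N) :
    ((V ⊗ₖ (1 : Matrix N N ℂ)) *ᵥ ξ) (a, i) = (V *ᵥ fun b => ξ (b, i)) a := by
  rw [kron_mulVec]
  simp only [Matrix.one_mulVec]
  rfl

lemma kron_diagonal_mulVec (V : Matrix K K ℂ) (d : N → ℂ) (ξ : K × N → ℂ) (a : K) (i : N) :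
    ((V ⊗ₖ Matrix.diagonal d) *ᵥ ξ) (a, i) = d i * (V *ᵥ fun b => ξ (b, i)) a := by
  rw [kron_mulVec]
  simp only [Matrix.mulVec_diagonal]
  rw [Matrix.mulVec, dotProduct, Finset.mul_sum]
  refine Finset.sum_congr rfl fun b _ => ?_
  ring

lemma kron_tensor_mulVec (V : Matrix K K ℂ) (B : Matrix ι κ ℂ) (y : K → ℂ) (u : κ → ℂ)
    (a : K) (i : ι) :
    ((V ⊗ₖ B) *ᵥ fun p : K × κ => y p.1 * u p.2) (a, i) = (V *ᵥ y) a * (B *ᵥ u) i := by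
  rw [kron_mulVec]
  have : ∀ b : K, (B *ᵥ fun j => y b * u j) i = y b * (B *ᵥ u) i := by
    intro b
    rw [Matrix.mulVec, dotProduct, Matrix.mulVec, dotProduct, Finset.mul_sum]
    exact Finset.sum_congr rfl fun j _ => by ring
  simp only [this]
  rw [show (V *ᵥ y) a = ∑ b, V a b * y b from rfl, Finset.sum_mul]
  exact Finset.sum_congr rfl fun b _ => by ring

end Kron

section Model
variable {K : Type*} [Fintype K] [DecidableEq K]

/-- The 2k×2k model matrix `[[α₁ V1, s V2],[0, α₂ V1]]`. -/
noncomputable def Mdl (α₁ α₂ : ℂ) (V1 V2 : Matrix K K ℂ) (s : ℝ) : Matrix (K ⊕ K) (K ⊕ K) ℂ :=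
  Matrix.fromBlocks (α₁ • V1) ((s : ℂ) • V2) 0 (α₂ • V1)

variable (α₁ α₂ : ℂ) (V1 V2 : Matrix K K ℂ)

lemma mdl_mulVec (s : ℝ) (x y : K → ℂ) :
    Mdl α₁ α₂ V1 V2 s *ᵥ Sum.elim x y
      = Sum.elim (α₁ • (V1 *ᵥ x) + (s : ℂ) • (V2 *ᵥ y)) (α₂ • (V1 *ᵥ y)) := by
  rw [Mdl, Matrix.fromBlocks_mulVec]
  simp [Matrix.smul_mulVec]

lemma mdl_neg (t : ℝ) : ‖Mdl α₁ α₂ V1 V2 (-t)‖ = ‖Mdl α₁ α₂ V1 V2 t‖ := by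
  set E : Matrix (K ⊕ K) (K ⊕ K) ℂ :=
    Matrix.fromBlocks (1 : Matrix K K ℂ) 0 0 (-(1 : Matrix K K ℂ)) with hE
  have hEnorm : ‖E‖ ≤ 1 := by
    refine norm_le_of_sqn zero_le_one fun v => ?_
    have : E *ᵥ v = Sum.elim (v ∘ Sum.inl) (-(v ∘ Sum.inr)) := by
      rw [hE, Matrix.fromBlocks_mulVec]
      simp [Matrix.neg_mulVec]
    rw [this, sqn_sum, sqn_sum]
    simp only [Sum.elim_comp_inl, Sum.elim_comp_inr, one_pow, one_mul]
    have : sqn (-(v ∘ Sum.inr)) = sqn (v ∘ Sum.inr) := by simp [sqn]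
    rw [this]
  have key : ∀ t : ℝ, E * Mdl α₁ α₂ V1 V2 t * E = Mdl α₁ α₂ V1 V2 (-t) := by
    intro t
    rw [hE, Mdl, Mdl, Matrix.fromBlocks_multiply, Matrix.fromBlocks_multiply]
    congr 1 <;> push_cast <;> simp <;> try rfl
  refine le_antisymm ?_ ?_
  · rw [← key t]; exact norm_triple_le hEnorm hEnorm _
  · have : Mdl α₁ α₂ V1 V2 t = E * Mdl α₁ α₂ V1 V2 (-t) * E := by
      rw [key (-t), neg_neg]
    rw [this]; exact norm_triple_le hEnorm hEnorm _

lemma mdl_mono {s t : ℝ} (h : |s| ≤ t) :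
    ‖Mdl α₁ α₂ V1 V2 s‖ ≤ ‖Mdl α₁ α₂ V1 V2 t‖ := by
  have ht : 0 ≤ t := le_trans (abs_nonneg s) h
  have hs1 : -t ≤ s := (abs_le.mp h).1
  have hs2 : s ≤ t := (abs_le.mp h).2
  rcases eq_or_lt_of_le ht with ht0 | ht0
  · have hs : s = 0 := abs_eq_zero.mp (le_antisymm (ht0 ▸ h) (abs_nonneg s))
    rw [hs, ← ht0]
  · set l : ℝ := (s + t) / (2 * t) with hl
    have htne : (t : ℂ) ≠ 0 := by exact_mod_cast ne_of_gt ht0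
    have hl0 : 0 ≤ l := div_nonneg (by linarith) (by linarith)
    have hl1 : l ≤ 1 := by
      rw [hl, div_le_one (by linarith)]; linarith
    have hsc : (l : ℂ) * t + (1 - l) * (-t) = s := by
      rw [hl]; push_cast; field_simp; ring
    have key : Mdl α₁ α₂ V1 V2 s
        = (l : ℂ) • Mdl α₁ α₂ V1 V2 t + ((1 - l : ℝ) : ℂ) • Mdl α₁ α₂ V1 V2 (-t) := by
      ext i j
      rcases i with i | i <;> rcases j with j | j <;>
        simp only [Mdl, Matrix.fromBlocks, Matrix.smul_apply, Matrix.add_apply,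
          Matrix.of_apply, Sum.elim_inl, Sum.elim_inr, Matrix.zero_apply, smul_eq_mul,
          Complex.ofReal_sub, Complex.ofReal_one, Complex.ofReal_neg]
      · ring
      · push_cast; linear_combination (-(V2 i j)) * hsc
      · ring
      · ring
    rw [key]
    refine le_trans (norm_add_le _ _) ?_
    rw [norm_smul, norm_smul, mdl_neg]
    have h1 : ‖((l : ℝ) : ℂ)‖ = l := by
      rw [Complex.norm_real, Real.norm_eq_abs, abs_of_nonneg hl0]
    have h2 : ‖((1 - l : ℝ) : ℂ)‖ = 1 - l := by
      rw [Complex.norm_real, Real.norm_eq_abs, abs_of_nonneg (by linarith)]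
    rw [h1, h2, ← add_mul]
    simp

lemma mdl_corner1 (t : ℝ) : ‖α₁ • V1‖ ≤ ‖Mdl α₁ α₂ V1 V2 t‖ := by
  refine norm_le_of_sqn (norm_nonneg _) fun v => ?_
  have h := sqn_mulVec_le (Mdl α₁ α₂ V1 V2 t) (Sum.elim v 0)
  rw [mdl_mulVec] at h
  rw [sqn_sum, sqn_sum] at h
  simp only [Sum.elim_comp_inl, Sum.elim_comp_inr, Matrix.mulVec_zero, smul_zero,
    add_zero] at h
  have hz : sqn (fun _ : K => (0:ℂ)) = 0 := sqn_zero
  rw [show ((0 : K → ℂ)) = (fun _ : K => (0:ℂ)) from rfl] at h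
  rw [hz] at h
  rw [Matrix.smul_mulVec]
  nlinarith [sqn_nonneg (α₁ • (V1 *ᵥ v))]

lemma mdl_corner2 (t : ℝ) : ‖α₂ • V1‖ ≤ ‖Mdl α₁ α₂ V1 V2 t‖ := by
  refine norm_le_of_sqn (norm_nonneg _) fun v => ?_
  have h := sqn_mulVec_le (Mdl α₁ α₂ V1 V2 t) (Sum.elim 0 v)
  rw [mdl_mulVec] at h
  rw [sqn_sum, sqn_sum] at h
  simp only [Sum.elim_comp_inl, Sum.elim_comp_inr, Matrix.mulVec_zero, smul_zero,
    zero_add] at h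
  have hz : sqn (fun _ : K => (0:ℂ)) = 0 := sqn_zero
  rw [show ((0 : K → ℂ)) = (fun _ : K => (0:ℂ)) from rfl] at h
  rw [hz] at h
  rw [Matrix.smul_mulVec]
  nlinarith [sqn_nonneg ((t:ℂ) • (V2 *ᵥ v)), sqn_nonneg v]

end Model

section Tmat
variable {K : Type*} [Fintype K] [DecidableEq K]

/-- The big block matrix `[[α₁ (V1 ⊗ I), V2 ⊗ B],[0, α₂ (V1 ⊗ I)]]`. -/
noncomputable def Tmat (α₁ α₂ : ℂ) (V1 V2 : Matrix K K ℂ) {ι κ : Type*} [Fintype ι] [Fintype κ]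
    [DecidableEq ι] [DecidableEq κ] (B : Matrix ι κ ℂ) :
    Matrix ((K × ι) ⊕ (K × κ)) ((K × ι) ⊕ (K × κ)) ℂ :=
  Matrix.fromBlocks (α₁ • (V1 ⊗ₖ (1 : Matrix ι ι ℂ))) (V2 ⊗ₖ B)
    0 (α₂ • (V1 ⊗ₖ (1 : Matrix κ κ ℂ)))

variable (α₁ α₂ : ℂ) (V1 V2 : Matrix K K ℂ)

lemma T_diag_le {N : Type*} [Fintype N] [DecidableEq N] (d : N → ℝ) {t : ℝ}
    (hd : ∀ i, |d i| ≤ t) :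
    ‖Tmat α₁ α₂ V1 V2 (Matrix.diagonal (fun i => (d i : ℂ)))‖ ≤ ‖Mdl α₁ α₂ V1 V2 t‖ := by
  refine norm_le_of_sqn (norm_nonneg _) fun v => ?_
  set ξ : K × N → ℂ := v ∘ Sum.inl with hξ
  set η : K × N → ℂ := v ∘ Sum.inr with hη
  have hmv : Tmat α₁ α₂ V1 V2 (Matrix.diagonal (fun i => (d i : ℂ))) *ᵥ v
      = Sum.elim (α₁ • ((V1 ⊗ₖ (1 : Matrix N N ℂ)) *ᵥ ξ)
          + (V2 ⊗ₖ Matrix.diagonal (fun i => (d i : ℂ))) *ᵥ η)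
        (α₂ • ((V1 ⊗ₖ (1 : Matrix N N ℂ)) *ᵥ η)) := by
    rw [Tmat, Matrix.fromBlocks_mulVec]
    simp [Matrix.smul_mulVec, hξ, hη]
  rw [hmv, sqn_sum]
  simp only [Sum.elim_comp_inl, Sum.elim_comp_inr]
  rw [sqn_prod, sqn_prod]
  have hslice : ∀ i : N,
      sqn (fun a => (α₁ • ((V1 ⊗ₖ (1 : Matrix N N ℂ)) *ᵥ ξ)
          + (V2 ⊗ₖ Matrix.diagonal (fun i => (d i : ℂ))) *ᵥ η) (a, i))
        + sqn (fun a => (α₂ • ((V1 ⊗ₖ (1 : Matrix N N ℂ)) *ᵥ η)) (a, i))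
      ≤ ‖Mdl α₁ α₂ V1 V2 t‖ ^ 2 * (sqn (fun b => ξ (b, i)) + sqn (fun b => η (b, i))) := by
    intro i
    set x : K → ℂ := fun b => ξ (b, i)
    set y : K → ℂ := fun b => η (b, i)
    have e1 : (fun a => (α₁ • ((V1 ⊗ₖ (1 : Matrix N N ℂ)) *ᵥ ξ)
          + (V2 ⊗ₖ Matrix.diagonal (fun i => (d i : ℂ))) *ᵥ η) (a, i))
        = α₁ • (V1 *ᵥ x) + ((d i : ℝ) : ℂ) • (V2 *ᵥ y) := by
      funext a
      simp only [Pi.add_apply, Pi.smul_apply, smul_eq_mul]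
      rw [kron_one_mulVec, kron_diagonal_mulVec]
    have e2 : (fun a => (α₂ • ((V1 ⊗ₖ (1 : Matrix N N ℂ)) *ᵥ η)) (a, i))
        = α₂ • (V1 *ᵥ y) := by
      funext a
      simp only [Pi.smul_apply, smul_eq_mul]
      rw [kron_one_mulVec]
    rw [e1, e2]
    have h1 : sqn (α₁ • (V1 *ᵥ x) + ((d i : ℝ) : ℂ) • (V2 *ᵥ y)) + sqn (α₂ • (V1 *ᵥ y))
        = sqn (Mdl α₁ α₂ V1 V2 (d i) *ᵥ Sum.elim x y) := by
      rw [mdl_mulVec, sqn_sum]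
      simp
    rw [h1]
    have h2 := sqn_mulVec_le (Mdl α₁ α₂ V1 V2 (d i)) (Sum.elim x y)
    have h3 : ‖Mdl α₁ α₂ V1 V2 (d i)‖ ^ 2 ≤ ‖Mdl α₁ α₂ V1 V2 t‖ ^ 2 := by
      have := mdl_mono α₁ α₂ V1 V2 (hd i)
      nlinarith [norm_nonneg (Mdl α₁ α₂ V1 V2 (d i))]
    have h4 : sqn (Sum.elim x y) = sqn x + sqn y := by
      rw [sqn_sum]; simp
    rw [h4] at h2
    nlinarith [sqn_nonneg x, sqn_nonneg y]
  calc (∑ i : N, sqn (fun a => (α₁ • ((V1 ⊗ₖ (1 : Matrix N N ℂ)) *ᵥ ξ)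
          + (V2 ⊗ₖ Matrix.diagonal (fun i => (d i : ℂ))) *ᵥ η) (a, i)))
        + ∑ i : N, sqn (fun a => (α₂ • ((V1 ⊗ₖ (1 : Matrix N N ℂ)) *ᵥ η)) (a, i))
      = ∑ i : N, (sqn (fun a => (α₁ • ((V1 ⊗ₖ (1 : Matrix N N ℂ)) *ᵥ ξ)
          + (V2 ⊗ₖ Matrix.diagonal (fun i => (d i : ℂ))) *ᵥ η) (a, i))
        + sqn (fun a => (α₂ • ((V1 ⊗ₖ (1 : Matrix N N ℂ)) *ᵥ η)) (a, i))) := by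
        rw [Finset.sum_add_distrib]
    _ ≤ ∑ i : N, ‖Mdl α₁ α₂ V1 V2 t‖ ^ 2 * (sqn (fun b => ξ (b, i)) + sqn (fun b => η (b, i))) :=
        Finset.sum_le_sum fun i _ => hslice i
    _ = ‖Mdl α₁ α₂ V1 V2 t‖ ^ 2 * sqn v := by
        rw [← Finset.mul_sum]
        congr 1
        rw [Finset.sum_add_distrib, ← sqn_prod, ← sqn_prod, ← sqn_sum]


lemma T_conj {N : Type*} [Fintype N] [DecidableEq N] (U : Matrix N N ℂ)
    (hU2 : U * Uᴴ = 1) (C : Matrix N N ℂ) :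
    (Matrix.fromBlocks ((1 : Matrix K K ℂ) ⊗ₖ U) 0 0 ((1 : Matrix K K ℂ) ⊗ₖ U))
      * Tmat α₁ α₂ V1 V2 C
      * (Matrix.fromBlocks ((1 : Matrix K K ℂ) ⊗ₖ Uᴴ) 0 0 ((1 : Matrix K K ℂ) ⊗ₖ Uᴴ))
    = Tmat α₁ α₂ V1 V2 (U * C * Uᴴ) := by
  rw [Tmat, Tmat, Matrix.fromBlocks_multiply, Matrix.fromBlocks_multiply]
  rw [Matrix.fromBlocks_inj]
  have hone : ((1 : Matrix K K ℂ) ⊗ₖ U) * (V1 ⊗ₖ (1 : Matrix N N ℂ))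
      * ((1 : Matrix K K ℂ) ⊗ₖ Uᴴ) = V1 ⊗ₖ (1 : Matrix N N ℂ) := by
    rw [← Matrix.mul_kronecker_mul, ← Matrix.mul_kronecker_mul, one_mul, mul_one, mul_one, hU2]
  refine ⟨?_, ?_, ?_, ?_⟩
  · simp [hone]
  · simp only [Matrix.zero_mul, Matrix.mul_zero, add_zero, zero_add]
    rw [← Matrix.mul_kronecker_mul, ← Matrix.mul_kronecker_mul, one_mul, mul_one]
  · simp
  · simp only [Matrix.zero_mul, Matrix.mul_zero, add_zero, zero_add]
    rw [Matrix.mul_smul, Matrix.smul_mul, hone]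

lemma T_herm_le {N : Type*} [Fintype N] [DecidableEq N] (Bt : Matrix N N ℂ)
    (hBt : Bt.IsHermitian) {t : ℝ} (hBtn : ‖Bt‖ ≤ t) :
    ‖Tmat α₁ α₂ V1 V2 Bt‖ ≤ ‖Mdl α₁ α₂ V1 V2 t‖ := by
  classical
  set U : Matrix N N ℂ := (hBt.eigenvectorUnitary : Matrix N N ℂ) with hUdef
  have hU1 : Uᴴ * U = 1 := by
    rw [← Matrix.star_eq_conjTranspose]
    exact (Matrix.mem_unitaryGroup_iff'.mp (hBt.eigenvectorUnitary).2)
  have hU2 : U * Uᴴ = 1 := by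
    rw [← Matrix.star_eq_conjTranspose]
    exact (Matrix.mem_unitaryGroup_iff.mp (hBt.eigenvectorUnitary).2)
  have hUH1 : ‖U‖ ≤ 1 := norm_unitary_le hU1
  have hUH2 : ‖Uᴴ‖ ≤ 1 := norm_unitary_le (by
    rw [Matrix.conjTranspose_conjTranspose]; exact hU2)
  set d : N → ℝ := hBt.eigenvalues with hd
  set D : Matrix N N ℂ := Matrix.diagonal (fun i => (d i : ℂ)) with hD
  have hDeq : D = Matrix.diagonal (RCLike.ofReal ∘ d) := rfl
  have hspec : U * D * Uᴴ = Bt := by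
    rw [hDeq, ← Matrix.star_eq_conjTranspose]
    exact hBt.spectral_theorem.symm
  have hDBt : D = Uᴴ * Bt * U := by
    rw [hDeq, ← Matrix.star_eq_conjTranspose]
    have := hBt.conjStarAlgAut_star_eigenvectorUnitary
    simp only [Unitary.conjStarAlgAut_apply, Unitary.coe_star, star_star] at this
    exact this.symm
  have hDle : ‖D‖ ≤ t := by
    rw [hDBt]
    exact le_trans (norm_triple_le hUH2 hUH1 Bt) hBtn
  have hdle : ∀ i, |d i| ≤ t := by
    intro i
    have h5 := sqn_mulVec_le D (Pi.single i 1)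
    have h6 : sqn (D *ᵥ Pi.single i (1:ℂ)) = |d i| ^ 2 := by
      rw [hD, Matrix.mulVec_single]
      simp only [MulOpposite.op_one, one_smul]
      rw [sqn, Finset.sum_eq_single i]
      · simp [Complex.norm_real, Real.norm_eq_abs]
      · intro b _ hb
        simp [Matrix.diagonal_apply_ne _ hb]
      · simp
    have h7 : sqn (Pi.single i (1:ℂ)) = 1 := by
      rw [sqn, Finset.sum_eq_single i]
      · simp
      · intro b _ hb
        simp [Pi.single_apply, hb]
      · simp
    rw [h6, h7, mul_one] at h5
    nlinarith [abs_nonneg (d i), norm_nonneg D]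
  have hkron1 : (((1 : Matrix K K ℂ) ⊗ₖ U))ᴴ * ((1 : Matrix K K ℂ) ⊗ₖ U) = 1 := by
    rw [kronecker_conjTranspose, Matrix.conjTranspose_one,
      ← Matrix.mul_kronecker_mul, one_mul, hU1, Matrix.one_kronecker_one]
  have hkron2 : ((1 : Matrix K K ℂ) ⊗ₖ U) * (((1 : Matrix K K ℂ) ⊗ₖ U))ᴴ = 1 := by
    rw [kronecker_conjTranspose, Matrix.conjTranspose_one,
      ← Matrix.mul_kronecker_mul, one_mul, hU2, Matrix.one_kronecker_one]
  set W : Matrix ((K × N) ⊕ (K × N)) ((K × N) ⊕ (K × N)) ℂ :=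
    Matrix.fromBlocks ((1 : Matrix K K ℂ) ⊗ₖ U) 0 0 ((1 : Matrix K K ℂ) ⊗ₖ U) with hW
  have hWH : Wᴴ = Matrix.fromBlocks ((1 : Matrix K K ℂ) ⊗ₖ Uᴴ) 0 0
      ((1 : Matrix K K ℂ) ⊗ₖ Uᴴ) := by
    rw [hW, Matrix.fromBlocks_conjTranspose, kronecker_conjTranspose,
      Matrix.conjTranspose_one]
    simp
  have hW1 : Wᴴ * W = 1 := by
    rw [hW, Matrix.fromBlocks_conjTranspose, Matrix.fromBlocks_multiply]
    simp only [Matrix.conjTranspose_zero, Matrix.mul_zero, Matrix.zero_mul, add_zero,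
      zero_add, hkron1]
    exact Matrix.fromBlocks_one
  have hW2 : W * Wᴴ = 1 := by
    rw [hW, Matrix.fromBlocks_conjTranspose, Matrix.fromBlocks_multiply]
    simp only [Matrix.conjTranspose_zero, Matrix.mul_zero, Matrix.zero_mul, add_zero,
      zero_add, hkron2]
    exact Matrix.fromBlocks_one
  have hconj : W * Tmat α₁ α₂ V1 V2 D * Wᴴ = Tmat α₁ α₂ V1 V2 Bt := by
    rw [hWH, hW, T_conj α₁ α₂ V1 V2 U hU2 D, hspec]
  calc ‖Tmat α₁ α₂ V1 V2 Bt‖ = ‖W * Tmat α₁ α₂ V1 V2 D * Wᴴ‖ := by rw [hconj]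
    _ = ‖Tmat α₁ α₂ V1 V2 D‖ := norm_conj_unitary hW1 hW2 _
    _ ≤ ‖Mdl α₁ α₂ V1 V2 t‖ := T_diag_le α₁ α₂ V1 V2 d hdle


lemma T_rect_le {ι κ : Type*} [Fintype ι] [Fintype κ] [DecidableEq ι] [DecidableEq κ]
    (B : Matrix ι κ ℂ) :
    ‖Tmat α₁ α₂ V1 V2 B‖ ≤ ‖Tmat α₁ α₂ V1 V2 (Matrix.fromBlocks 0 B Bᴴ 0)‖ := by
  set Bt := Matrix.fromBlocks (0 : Matrix ι ι ℂ) B Bᴴ (0 : Matrix κ κ ℂ) with hBt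
  refine norm_le_of_sqn (norm_nonneg _) fun v => ?_
  set Φ : (((K × ι) ⊕ (K × κ)) → ℂ) → (((K × (ι ⊕ κ)) ⊕ (K × (ι ⊕ κ))) → ℂ) :=
    fun w => Sum.elim
      (fun p => Sum.elim (fun i => w (Sum.inl (p.1, i))) (fun _ => 0) p.2)
      (fun p => Sum.elim (fun _ => 0) (fun j => w (Sum.inr (p.1, j))) p.2) with hΦ
  have hsqn : ∀ w, sqn (Φ w) = sqn w := by
    intro w
    rw [hΦ, sqn_sum, sqn_sum]
    simp only [Sum.elim_comp_inl, Sum.elim_comp_inr]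
    rw [sqn_prod, sqn_prod, sqn_prod (w ∘ Sum.inl), sqn_prod (w ∘ Sum.inr),
      Fintype.sum_sum_type, Fintype.sum_sum_type]
    simp [sqn]
  have hmv : Tmat α₁ α₂ V1 V2 Bt *ᵥ Φ v = Φ (Tmat α₁ α₂ V1 V2 B *ᵥ v) := by
    have hL : Tmat α₁ α₂ V1 V2 Bt *ᵥ Φ v
        = Sum.elim (α₁ • ((V1 ⊗ₖ (1 : Matrix (ι ⊕ κ) (ι ⊕ κ) ℂ)) *ᵥ (Φ v ∘ Sum.inl))
            + (V2 ⊗ₖ Bt) *ᵥ (Φ v ∘ Sum.inr))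
          (α₂ • ((V1 ⊗ₖ (1 : Matrix (ι ⊕ κ) (ι ⊕ κ) ℂ)) *ᵥ (Φ v ∘ Sum.inr))) := by
      rw [Tmat, Matrix.fromBlocks_mulVec]
      simp [Matrix.smul_mulVec]
    have hR : Tmat α₁ α₂ V1 V2 B *ᵥ v
        = Sum.elim (α₁ • ((V1 ⊗ₖ (1 : Matrix ι ι ℂ)) *ᵥ (v ∘ Sum.inl))
            + (V2 ⊗ₖ B) *ᵥ (v ∘ Sum.inr))
          (α₂ • ((V1 ⊗ₖ (1 : Matrix κ κ ℂ)) *ᵥ (v ∘ Sum.inr))) := by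
      rw [Tmat, Matrix.fromBlocks_mulVec]
      simp [Matrix.smul_mulVec]
    rw [hL, hR]
    funext q
    have hBtin : ∀ (b : K) (i : ι), (Bt *ᵥ fun W => (Φ v ∘ Sum.inr) (b, W)) (Sum.inl i)
        = (B *ᵥ fun j => (v ∘ Sum.inr) (b, j)) i := by
      intro b i
      rw [hBt, Matrix.fromBlocks_mulVec]
      simp only [Sum.elim_inl]
      have h0 : ((fun W => (Φ v ∘ Sum.inr) (b, W)) ∘ Sum.inl) = (fun _ : ι => (0:ℂ)) := rfl
      have h1 : ((fun W => (Φ v ∘ Sum.inr) (b, W)) ∘ Sum.inr)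
          = (fun j : κ => (v ∘ Sum.inr) (b, j)) := rfl
      rw [h0, h1]
      simp [show (fun _ : ι => (0:ℂ)) = 0 from rfl]
    have hBtin2 : ∀ (b : K) (j : κ), (Bt *ᵥ fun W => (Φ v ∘ Sum.inr) (b, W)) (Sum.inr j)
        = 0 := by
      intro b j
      rw [hBt, Matrix.fromBlocks_mulVec]
      simp only [Sum.elim_inr]
      have h0 : ((fun W => (Φ v ∘ Sum.inr) (b, W)) ∘ Sum.inl) = (fun _ : ι => (0:ℂ)) := rfl
      rw [h0]
      simp [show (fun _ : ι => (0:ℂ)) = 0 from rfl]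
    rcases q with ⟨a, w⟩ | ⟨a, w⟩
    · rcases w with i | j
      · show (α₁ • ((V1 ⊗ₖ (1 : Matrix (ι ⊕ κ) (ι ⊕ κ) ℂ)) *ᵥ (Φ v ∘ Sum.inl))
            + (V2 ⊗ₖ Bt) *ᵥ (Φ v ∘ Sum.inr)) (a, Sum.inl i)
          = (α₁ • ((V1 ⊗ₖ (1 : Matrix ι ι ℂ)) *ᵥ (v ∘ Sum.inl))
            + (V2 ⊗ₖ B) *ᵥ (v ∘ Sum.inr)) (a, i)
        simp only [Pi.add_apply, Pi.smul_apply, smul_eq_mul]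
        rw [kron_one_mulVec, kron_one_mulVec, kron_mulVec, kron_mulVec]
        have e1 : (fun b => (Φ v ∘ Sum.inl) (b, Sum.inl i)) = (fun b => (v ∘ Sum.inl) (b, i)) := rfl
        rw [e1]
        congr 1
        exact Finset.sum_congr rfl fun b _ => by rw [hBtin b i]
      · show (α₁ • ((V1 ⊗ₖ (1 : Matrix (ι ⊕ κ) (ι ⊕ κ) ℂ)) *ᵥ (Φ v ∘ Sum.inl))
            + (V2 ⊗ₖ Bt) *ᵥ (Φ v ∘ Sum.inr)) (a, Sum.inr j) = 0
        simp only [Pi.add_apply, Pi.smul_apply, smul_eq_mul]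
        rw [kron_one_mulVec, kron_mulVec]
        have e1 : (fun b => (Φ v ∘ Sum.inl) (b, Sum.inr j)) = (fun _ : K => (0:ℂ)) := rfl
        rw [e1, show (fun _ : K => (0:ℂ)) = 0 from rfl, Matrix.mulVec_zero]
        simp only [Pi.zero_apply, mul_zero, zero_add, add_zero]
        refine Finset.sum_eq_zero fun b _ => ?_
        rw [hBtin2 b j, mul_zero]
    · rcases w with i | j
      · show (α₂ • ((V1 ⊗ₖ (1 : Matrix (ι ⊕ κ) (ι ⊕ κ) ℂ)) *ᵥ (Φ v ∘ Sum.inr))) (a, Sum.inl i) = 0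
        simp only [Pi.smul_apply, smul_eq_mul]
        rw [kron_one_mulVec]
        have e1 : (fun b => (Φ v ∘ Sum.inr) (b, Sum.inl i)) = (fun _ : K => (0:ℂ)) := rfl
        rw [e1, show (fun _ : K => (0:ℂ)) = 0 from rfl, Matrix.mulVec_zero]
        simp
      · show (α₂ • ((V1 ⊗ₖ (1 : Matrix (ι ⊕ κ) (ι ⊕ κ) ℂ)) *ᵥ (Φ v ∘ Sum.inr))) (a, Sum.inr j)
          = (α₂ • ((V1 ⊗ₖ (1 : Matrix κ κ ℂ)) *ᵥ (v ∘ Sum.inr))) (a, j)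
        simp only [Pi.smul_apply, smul_eq_mul]
        rw [kron_one_mulVec, kron_one_mulVec]
        have e1 : (fun b => (Φ v ∘ Sum.inr) (b, Sum.inr j)) = (fun b => (v ∘ Sum.inr) (b, j)) := rfl
        rw [e1]
  calc sqn (Tmat α₁ α₂ V1 V2 B *ᵥ v) = sqn (Φ (Tmat α₁ α₂ V1 V2 B *ᵥ v)) := (hsqn _).symm
    _ = sqn (Tmat α₁ α₂ V1 V2 Bt *ᵥ Φ v) := by rw [hmv]
    _ ≤ ‖Tmat α₁ α₂ V1 V2 Bt‖ ^ 2 * sqn (Φ v) := sqn_mulVec_le _ _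
    _ = ‖Tmat α₁ α₂ V1 V2 Bt‖ ^ 2 * sqn v := by rw [hsqn]


lemma mdl_le_T {ι κ : Type*} [Fintype ι] [Fintype κ] [DecidableEq ι] [DecidableEq κ]
    [Nonempty κ] (B : Matrix ι κ ℂ) (hB : B ≠ 0) :
    ‖Mdl α₁ α₂ V1 V2 ‖B‖‖ ≤ ‖Tmat α₁ α₂ V1 V2 B‖ := by
  obtain ⟨u, hu1, hu2⟩ := exists_attain B
  have hBn : (0:ℝ) < ‖B‖ := norm_pos_iff.mpr hB
  set c : ℂ := (‖B‖ : ℂ) with hc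
  have hcn : ‖c‖ = ‖B‖ := by
    rw [hc, Complex.norm_real, Real.norm_eq_abs, abs_of_nonneg (norm_nonneg B)]
  have hcne : c ≠ 0 := by
    rw [hc]
    exact_mod_cast ne_of_gt hBn
  set w0 : ι → ℂ := fun i => c⁻¹ * (B *ᵥ u) i with hw0
  have hw0sq : sqn w0 = 1 := by
    rw [hw0, sqn_const_mul, hu2, norm_inv, hcn]
    field_simp
  have hBu : B *ᵥ u = fun i => c * w0 i := by
    funext i
    rw [hw0]
    field_simp
  refine norm_le_of_sqn (norm_nonneg _) fun w => ?_
  set x : K → ℂ := w ∘ Sum.inl with hx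
  set y : K → ℂ := w ∘ Sum.inr with hy
  have hw : Sum.elim x y = w := Sum.elim_comp_inl_inr w
  set z : ((K × ι) ⊕ (K × κ)) → ℂ :=
    Sum.elim (fun p => x p.1 * w0 p.2) (fun p => y p.1 * u p.2) with hz
  have hzq : sqn z = sqn w := by
    rw [hz, sqn_sum]
    simp only [Sum.elim_comp_inl, Sum.elim_comp_inr]
    rw [sqn_tensor, sqn_tensor, hw0sq, hu1, mul_one, mul_one, ← hw, sqn_sum]
    simp
  have hmv : Tmat α₁ α₂ V1 V2 B *ᵥ z
      = Sum.elim (fun p : K × ι => (α₁ • (V1 *ᵥ x) + c • (V2 *ᵥ y)) p.1 * w0 p.2)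
          (fun p : K × κ => (α₂ • (V1 *ᵥ y)) p.1 * u p.2) := by
    rw [Tmat, Matrix.fromBlocks_mulVec]
    have h1 : (z ∘ Sum.inl) = fun p : K × ι => x p.1 * w0 p.2 := rfl
    have h2 : (z ∘ Sum.inr) = fun p : K × κ => y p.1 * u p.2 := rfl
    rw [h1, h2]
    funext q
    rcases q with ⟨a, i⟩ | ⟨a, j⟩
    · simp only [Sum.elim_inl, Pi.add_apply, Matrix.smul_mulVec, Pi.smul_apply,
        smul_eq_mul, Matrix.zero_mulVec, Pi.zero_apply, add_zero]
      rw [kron_tensor_mulVec, kron_tensor_mulVec, Matrix.one_mulVec, hBu]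
      ring
    · simp only [Sum.elim_inr, Pi.add_apply, Matrix.smul_mulVec, Pi.smul_apply,
        smul_eq_mul, Matrix.zero_mulVec, Pi.zero_apply, zero_add]
      rw [kron_tensor_mulVec, Matrix.one_mulVec]
      ring
  have hmdl : Mdl α₁ α₂ V1 V2 ‖B‖ *ᵥ w
      = Sum.elim (α₁ • (V1 *ᵥ x) + c • (V2 *ᵥ y)) (α₂ • (V1 *ᵥ y)) := by
    rw [← hw, mdl_mulVec]
  have hfinal : sqn (Mdl α₁ α₂ V1 V2 ‖B‖ *ᵥ w) = sqn (Tmat α₁ α₂ V1 V2 B *ᵥ z) := by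
    rw [hmdl, hmv, sqn_sum, sqn_sum]
    simp only [Sum.elim_comp_inl, Sum.elim_comp_inr]
    rw [sqn_tensor, sqn_tensor, hw0sq, hu1, mul_one, mul_one]
  rw [hfinal, ← hzq]
  exact sqn_mulVec_le _ _

end Tmat
end Stmt15

section Final
open Stmt15 Matrix

/-- The operator norm of the block matrix
`[[α₁ (V₁ ⊗ I_m), V₂ ⊗ B],[0, α₂ (V₁ ⊗ I_n)]]` depends on the nonzero matrix `B` only
through its operator norm: it equals the operator norm of
`[[α₁ V₁, ‖B‖ V₂],[0, α₂ V₁]]`. -/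
theorem stmt15 {k m n : ℕ} (α₁ α₂ : ℂ)
    (V1 V2 : Matrix (Fin k) (Fin k) ℂ)
    (B : Matrix (Fin m) (Fin n) ℂ) (hB : B ≠ 0) :
    opNorm (Matrix.fromBlocks
        (α₁ • (V1 ⊗ₖ (1 : Matrix (Fin m) (Fin m) ℂ))) (V2 ⊗ₖ B)
        0 (α₂ • (V1 ⊗ₖ (1 : Matrix (Fin n) (Fin n) ℂ))))
      = opNorm (Matrix.fromBlocks (α₁ • V1) ((opNorm B : ℂ) • V2) 0 (α₂ • V1)) := by
  classical
  have hn : Nonempty (Fin n) := by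
    rcases Nat.eq_zero_or_pos n with h0 | h
    · exfalso
      apply hB
      subst h0
      funext i j
      exact j.elim0
    · exact ⟨⟨0, h⟩⟩
  rw [show opNorm B = ‖B‖ from rfl, opNorm_eq, opNorm_eq]
  have hgoal1 : (Matrix.fromBlocks
        (α₁ • (V1 ⊗ₖ (1 : Matrix (Fin m) (Fin m) ℂ))) (V2 ⊗ₖ B)
        0 (α₂ • (V1 ⊗ₖ (1 : Matrix (Fin n) (Fin n) ℂ)))) = Tmat α₁ α₂ V1 V2 B := rfl
  have hgoal2 : (Matrix.fromBlocks (α₁ • V1) (((‖B‖ : ℝ) : ℂ) • V2) 0 (α₂ • V1))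
      = Mdl α₁ α₂ V1 V2 ‖B‖ := rfl
  rw [hgoal1, hgoal2]
  refine le_antisymm ?_ (mdl_le_T α₁ α₂ V1 V2 B hB)
  set Bt : Matrix ((Fin m) ⊕ (Fin n)) ((Fin m) ⊕ (Fin n)) ℂ :=
    Matrix.fromBlocks 0 B Bᴴ 0 with hBt
  have hherm : Bt.IsHermitian := by
    show Btᴴ = Bt
    rw [hBt, Matrix.fromBlocks_conjTranspose]
    simp
  have hBtle : ‖Bt‖ ≤ ‖B‖ := by
    refine norm_le_of_sqn (norm_nonneg _) fun v => ?_
    have hmv : Bt *ᵥ v = Sum.elim (B *ᵥ (v ∘ Sum.inr)) (Bᴴ *ᵥ (v ∘ Sum.inl)) := by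
      rw [hBt, Matrix.fromBlocks_mulVec]
      simp
    rw [hmv, sqn_sum]
    simp only [Sum.elim_comp_inl, Sum.elim_comp_inr]
    have h1 := sqn_mulVec_le B (v ∘ Sum.inr)
    have h2 := sqn_mulVec_le Bᴴ (v ∘ Sum.inl)
    rw [Matrix.l2_opNorm_conjTranspose] at h2
    rw [sqn_sum v]
    nlinarith [sqn_nonneg (v ∘ Sum.inl), sqn_nonneg (v ∘ Sum.inr), norm_nonneg B]
  exact le_trans (T_rect_le α₁ α₂ V1 V2 B) (T_herm_le α₁ α₂ V1 V2 Bt hherm hBtle)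

end Final
end

section
/- Let Ω = {(z₁, z₂, z₃) ∈ ℂ³ : |z₁| ≤ 1, |z₃| ≤ 1, and |z₂|² ≤ (1 − |z₁|²)(1 − |z₃|²)}. Then for all nonnegative integers n, m, p, ∫_Ω |z₁|^{2n} |z₂|^{2m} |z₃|^{2p} dV(z) = π³ · (n!·(m+1)!/(n+m+2)!) · (p!·(m+1)!/(p+m+2)!) / (m+1), where dV is Lebesgue measure on ℂ³ ≅ ℝ⁶. (These are the squared norms of the monomials z₁ⁿz₂ᵐz₃ᵖ in the Bergman space of Ω; note n!·(m+1)!/(n+m+2)! = β(n+1, m+2) is the Beta function.) -/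
open MeasureTheory Set intervalIntegral

lemma prod_fact (k l : ℕ) :
    ∏ j ∈ Finset.range (l + 1), ((k : ℂ) + 1 + j)
      = ((k + l + 1).factorial : ℂ) / (k.factorial : ℂ) := by
  have hk : (k.factorial : ℂ) ≠ 0 := Nat.cast_ne_zero.2 k.factorial_ne_zero
  induction l with
  | zero =>
      simp [Nat.factorial_succ]
      field_simp
  | succ l ih =>
      rw [Finset.prod_range_succ, ih]
      have : (k + (l+1) + 1).factorial = (k + l + 2) * (k + l + 1).factorial := by
        have : k + (l+1) + 1 = (k + l + 1) + 1 := by ring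
        rw [this, Nat.factorial_succ]
      rw [this]
      push_cast
      field_simp
      ring

lemma beta_nat (k l : ℕ) :
    ∫ x in (0:ℝ)..1, x ^ k * (1 - x) ^ l
      = (k.factorial : ℝ) * (l.factorial : ℝ) / ((k + l + 1).factorial : ℝ) := by
  have h1 : Complex.betaIntegral (k + 1) (l + 1)
      = ((∫ x in (0:ℝ)..1, x ^ k * (1 - x) ^ l : ℝ) : ℂ) := by
    rw [Complex.betaIntegral, ← intervalIntegral.integral_ofReal]
    apply intervalIntegral.integral_congr
    intro x _
    push_cast
    rw [add_sub_cancel_right, add_sub_cancel_right, Complex.cpow_natCast,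
      Complex.cpow_natCast]
  have h2 := Complex.betaIntegral_eval_nat_add_one_right
      (u := (k : ℂ) + 1) (by simp; positivity) l
  have h3 : ∀ j : ℕ, (k : ℂ) + 1 + j = (k : ℂ) + 1 + j := fun _ => rfl
  rw [h1] at h2
  have h4 : ((∫ x in (0:ℝ)..1, x ^ k * (1 - x) ^ l : ℝ) : ℂ)
      = ((k.factorial : ℝ) * (l.factorial : ℝ) / ((k + l + 1).factorial : ℝ) : ℝ) := by
    rw [h2, prod_fact]
    have hk : (k.factorial : ℂ) ≠ 0 := Nat.cast_ne_zero.2 k.factorial_ne_zero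
    have hkl : ((k + l + 1).factorial : ℂ) ≠ 0 := Nat.cast_ne_zero.2 (k+l+1).factorial_ne_zero
    push_cast
    field_simp
  exact_mod_cast h4

lemma radial (g : ℝ → ℝ) :
    ∫ w : ℂ, g ‖w‖ = 2 * Real.pi * ∫ y in Ioi (0:ℝ), y * g y := by
  rw [MeasureTheory.integral_fun_norm_addHaar volume g]
  have h : volume.real (Metric.ball (0:ℂ) 1) = Real.pi := by
    simp [measureReal_def, Complex.volume_ball]
  rw [Complex.finrank_real_complex, h]
  simp only [smul_eq_mul, nsmul_eq_mul, pow_one, Nat.cast_ofNat]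
  norm_num [mul_assoc]

lemma radial_cut (g : ℝ → ℝ) {R : ℝ} (hR : 0 ≤ R) :
    ∫ w : ℂ, (if ‖w‖ ≤ R then g ‖w‖ else 0) = 2 * Real.pi * ∫ y in (0:ℝ)..R, y * g y := by
  have := radial (fun y => if y ≤ R then g y else 0)
  rw [this]
  congr 1
  have : ∀ y : ℝ, y * (if y ≤ R then g y else 0) = Set.indicator (Iic R) (fun y => y * g y) y := by
    intro y
    simp only [Set.indicator_apply, mem_Iic]
    split <;> simp
  simp_rw [this]
  rw [MeasureTheory.setIntegral_indicator measurableSet_Iic, Set.Ioi_inter_Iic,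
    intervalIntegral.integral_of_le hR]

lemma disk_pow (k : ℕ) {R : ℝ} (hR : 0 ≤ R) :
    ∫ w : ℂ, (if ‖w‖ ≤ R then ‖w‖ ^ (2 * k) else 0)
      = Real.pi * R ^ (2 * (k + 1)) / (k + 1) := by
  rw [radial_cut (fun y => y ^ (2 * k)) hR]
  have : ∀ y : ℝ, y * y ^ (2 * k) = y ^ (2 * k + 1) := fun y => by ring
  simp_rw [this, integral_pow]
  have hk : ((k : ℝ) + 1) ≠ 0 := by positivity
  have h1 : (2 * k + 1 + 1 : ℕ) = 2 * (k + 1) := by ring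
  rw [h1]
  push_cast
  field_simp
  ring

lemma disk_beta (k l : ℕ) :
    ∫ w : ℂ, (if ‖w‖ ≤ 1 then ‖w‖ ^ (2 * k) * (1 - ‖w‖ ^ 2) ^ l else 0)
      = Real.pi * ((k.factorial : ℝ) * (l.factorial : ℝ) / ((k + l + 1).factorial : ℝ)) := by
  rw [radial_cut (fun y => y ^ (2 * k) * (1 - y ^ 2) ^ l) zero_le_one]
  have hsub : ∫ x in (0:ℝ)..1, ((fun u => u ^ k * (1 - u) ^ l) ∘ (fun x => x ^ 2)) x * (2 * x)
      = ∫ u in (0:ℝ)..1, u ^ k * (1 - u) ^ l := by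
    have h := intervalIntegral.integral_comp_mul_deriv
      (a := (0:ℝ)) (b := 1) (f := fun x => x ^ 2) (f' := fun x => 2 * x)
      (g := fun u => u ^ k * (1 - u) ^ l)
      (fun x _ => by simpa using hasDerivAt_pow 2 x)
      (by fun_prop) (by fun_prop)
    simpa using h
  have heq : ∀ y : ℝ, y * (y ^ (2 * k) * (1 - y ^ 2) ^ l)
      = (1/2) * (((fun u => u ^ k * (1 - u) ^ l) ∘ (fun x => x ^ 2)) y * (2 * y)) := by
    intro y
    simp only [Function.comp_apply, ← pow_mul]
    ring_nf
  rw [intervalIntegral.integral_congr (fun y _ => heq y), intervalIntegral.integral_const_mul,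
    hsub, beta_nat]
  ring

noncomputable def Gf (n m p : ℕ) : ℂ × ℂ × ℂ → ℝ := fun q =>
  if ‖q.1‖ ≤ 1 ∧ ‖q.2.2‖ ≤ 1 ∧ ‖q.2.1‖ ^ 2 ≤ (1 - ‖q.1‖ ^ 2) * (1 - ‖q.2.2‖ ^ 2)
  then ‖q.1‖ ^ (2 * n) * ‖q.2.1‖ ^ (2 * m) * ‖q.2.2‖ ^ (2 * p) else 0

lemma norm_le_one_of_cond {a b c : ℂ} (ha : ‖a‖ ≤ 1) (hc : ‖c‖ ≤ 1)
    (hb : ‖b‖ ^ 2 ≤ (1 - ‖a‖ ^ 2) * (1 - ‖c‖ ^ 2)) : ‖b‖ ≤ 1 := by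
  have ha2 : ‖a‖ ^ 2 ≤ 1 := by nlinarith [norm_nonneg a]
  have hc2 : ‖c‖ ^ 2 ≤ 1 := by nlinarith [norm_nonneg c]
  have ha0 : (0:ℝ) ≤ 1 - ‖a‖ ^ 2 := by linarith
  have hc0 : (0:ℝ) ≤ 1 - ‖c‖ ^ 2 := by linarith
  have hb2 : ‖b‖ ^ 2 ≤ 1 := le_trans hb (by nlinarith)
  nlinarith [norm_nonneg b]

lemma G_integrable (n m p : ℕ) : Integrable (Gf n m p) := by
  set T : Set (ℂ × ℂ × ℂ) :=
    {q | ‖q.1‖ ≤ 1 ∧ ‖q.2.2‖ ≤ 1 ∧ ‖q.2.1‖ ^ 2 ≤ (1 - ‖q.1‖ ^ 2) * (1 - ‖q.2.2‖ ^ 2)} with hT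
  have hTc : IsCompact T := by
    apply Metric.isCompact_of_isClosed_isBounded
    · rw [hT]; simp only [Set.setOf_and]
      exact (isClosed_le (by fun_prop) (by fun_prop)).inter
        ((isClosed_le (by fun_prop) (by fun_prop)).inter
          (isClosed_le (by fun_prop) (by fun_prop)))
    · apply (Metric.isBounded_closedBall (x := (0 : ℂ × ℂ × ℂ)) (r := 1)).subset
      rintro ⟨a, b, c⟩ ⟨h1, h2, h3⟩
      have hb := norm_le_one_of_cond h1 h2 h3
      simp only [Metric.mem_closedBall, dist_zero_right, Prod.norm_def,
        max_le_iff]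
      exact ⟨h1, hb, h2⟩
  have hmeas : MeasurableSet T := by
    rw [hT]; simp only [Set.setOf_and]
    exact (measurableSet_le (by fun_prop) (by fun_prop)).inter
      ((measurableSet_le (by fun_prop) (by fun_prop)).inter
        (measurableSet_le (by fun_prop) (by fun_prop)))
  have : Gf n m p = T.indicator
      (fun q => ‖q.1‖ ^ (2 * n) * ‖q.2.1‖ ^ (2 * m) * ‖q.2.2‖ ^ (2 * p)) := by
    funext q
    rw [Set.indicator_apply]
    rfl
  rw [this]
  rw [integrable_indicator_iff hmeas]
  exact (Continuous.continuousOn (by fun_prop)).integrableOn_compact hTc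

lemma G_slice_integrable (n m p : ℕ) (a : ℂ) :
    Integrable (fun r : ℂ × ℂ => Gf n m p (a, r)) := by
  by_cases ha : ‖a‖ ≤ 1
  · set T : Set (ℂ × ℂ) :=
      {r | ‖r.2‖ ≤ 1 ∧ ‖r.1‖ ^ 2 ≤ (1 - ‖a‖ ^ 2) * (1 - ‖r.2‖ ^ 2)} with hT
    have hTc : IsCompact T := by
      apply Metric.isCompact_of_isClosed_isBounded
      · rw [hT]; simp only [Set.setOf_and]
        exact (isClosed_le (by fun_prop) (by fun_prop)).inter
          (isClosed_le (by fun_prop) (by fun_prop))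
      · apply (Metric.isBounded_closedBall (x := (0 : ℂ × ℂ)) (r := 1)).subset
        rintro ⟨b, c⟩ ⟨h2, h3⟩
        have hb := norm_le_one_of_cond ha h2 h3
        simp only [Metric.mem_closedBall, dist_zero_right, Prod.norm_def,
          max_le_iff]
        exact ⟨hb, h2⟩
    have hmeas : MeasurableSet T := by
      rw [hT]; simp only [Set.setOf_and]
      exact (measurableSet_le (by fun_prop) (by fun_prop)).inter
        (measurableSet_le (by fun_prop) (by fun_prop))
    have : (fun r : ℂ × ℂ => Gf n m p (a, r)) = T.indicator
        (fun r => ‖a‖ ^ (2 * n) * ‖r.1‖ ^ (2 * m) * ‖r.2‖ ^ (2 * p)) := by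
      funext r
      rw [Set.indicator_apply]
      simp only [Gf, hT, Set.mem_setOf_eq]
      by_cases h : ‖r.2‖ ≤ 1 ∧ ‖r.1‖ ^ 2 ≤ (1 - ‖a‖ ^ 2) * (1 - ‖r.2‖ ^ 2)
      · rw [if_pos ⟨ha, h.1, h.2⟩, if_pos h]
      · rw [if_neg (by tauto), if_neg h]
    rw [this, integrable_indicator_iff hmeas]
    exact (Continuous.continuousOn (by fun_prop)).integrableOn_compact hTc
  · have : (fun r : ℂ × ℂ => Gf n m p (a, r)) = fun _ => 0 := by
      funext r
      simp only [Gf]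
      rw [if_neg (by tauto)]
    rw [this]
    exact integrable_zero _ _ _

lemma G_inner (n m p : ℕ) (a c : ℂ) :
    ∫ b : ℂ, Gf n m p (a, (b, c))
      = (if ‖a‖ ≤ 1 then ‖a‖ ^ (2 * n) * (1 - ‖a‖ ^ 2) ^ (m + 1) else 0)
        * (if ‖c‖ ≤ 1 then ‖c‖ ^ (2 * p) * (1 - ‖c‖ ^ 2) ^ (m + 1) else 0)
        * (Real.pi / (m + 1)) := by
  by_cases ha : ‖a‖ ≤ 1
  · by_cases hc : ‖c‖ ≤ 1
    · set Q : ℝ := (1 - ‖a‖ ^ 2) * (1 - ‖c‖ ^ 2) with hQdef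
      have ha0 : (0:ℝ) ≤ 1 - ‖a‖ ^ 2 := by nlinarith [norm_nonneg a]
      have hc0 : (0:ℝ) ≤ 1 - ‖c‖ ^ 2 := by nlinarith [norm_nonneg c]
      have hQ0 : 0 ≤ Q := mul_nonneg ha0 hc0
      have hfun : ∀ b : ℂ, Gf n m p (a, (b, c))
          = (if ‖b‖ ≤ Real.sqrt Q then ‖b‖ ^ (2 * m) else 0)
            * (‖a‖ ^ (2 * n) * ‖c‖ ^ (2 * p)) := by
        intro b
        have hiff : ‖b‖ ≤ Real.sqrt Q ↔ ‖b‖ ^ 2 ≤ Q :=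
          Real.le_sqrt (norm_nonneg b) hQ0
        simp only [Gf]
        by_cases hb : ‖b‖ ^ 2 ≤ Q
        · rw [if_pos ⟨ha, hc, hb⟩, if_pos (hiff.2 hb)]
          ring
        · rw [if_neg (by tauto), if_neg (fun h => hb (hiff.1 h))]
          ring
      rw [if_pos ha, if_pos hc]
      simp_rw [hfun]
      rw [MeasureTheory.integral_mul_const, disk_pow m (Real.sqrt_nonneg Q)]
      have hs : Real.sqrt Q ^ (2 * (m + 1)) = Q ^ (m + 1) := by
        rw [pow_mul, Real.sq_sqrt hQ0]
      rw [hs, hQdef, mul_pow]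
      ring
    · have hfun : ∀ b : ℂ, Gf n m p (a, (b, c)) = 0 := by
        intro b
        simp only [Gf]
        rw [if_neg (by tauto)]
      simp_rw [hfun]
      rw [if_neg hc]
      simp
  · have hfun : ∀ b : ℂ, Gf n m p (a, (b, c)) = 0 := by
      intro b
      simp only [Gf]
      rw [if_neg (by tauto)]
    simp_rw [hfun]
    rw [if_neg ha]
    simp

lemma G_total (n m p : ℕ) :
    ∫ q : ℂ × ℂ × ℂ, Gf n m p q
      = Real.pi ^ 3
          * ((n.factorial : ℝ) * ((m + 1).factorial : ℝ) / ((n + m + 2).factorial : ℝ))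
          * ((p.factorial : ℝ) * ((m + 1).factorial : ℝ) / ((p + m + 2).factorial : ℝ))
          / (m + 1) := by
  have hG := G_integrable n m p
  rw [Measure.volume_eq_prod] at hG ⊢
  rw [MeasureTheory.integral_prod _ hG]
  have hstep : ∀ a : ℂ, ∫ r : ℂ × ℂ, Gf n m p (a, r)
      = (if ‖a‖ ≤ 1 then ‖a‖ ^ (2 * n) * (1 - ‖a‖ ^ 2) ^ (m + 1) else 0)
        * (Real.pi * ((p.factorial : ℝ) * ((m + 1).factorial : ℝ)
              / ((p + m + 2).factorial : ℝ)))
        * (Real.pi / (m + 1)) := by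
    intro a
    have hsl := G_slice_integrable n m p a
    rw [Measure.volume_eq_prod] at hsl ⊢
    rw [MeasureTheory.integral_prod_symm _ hsl]
    simp_rw [G_inner n m p a]
    rw [MeasureTheory.integral_mul_const, MeasureTheory.integral_const_mul, disk_beta p (m + 1)]
    have : p + (m + 1) + 1 = p + m + 2 := by omega
    rw [this]
  simp_rw [hstep]
  rw [MeasureTheory.integral_mul_const, MeasureTheory.integral_mul_const, disk_beta n (m + 1)]
  have : n + (m + 1) + 1 = n + m + 2 := by omega
  rw [this]
  ring

noncomputable def eqv3 : (ℂ × ℂ × ℂ) ≃ᵐ (Fin 3 → ℂ) :=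
  ((MeasurableEquiv.refl ℂ).prodCongr
    (((MeasurableEquiv.refl ℂ).prodCongr (MeasurableEquiv.funUnique (Fin 1) ℂ).symm).trans
      (MeasurableEquiv.piFinSuccAbove (fun _ : Fin 2 => ℂ) 0).symm)).trans
    (MeasurableEquiv.piFinSuccAbove (fun _ : Fin 3 => ℂ) 0).symm

lemma eqv3_pres : MeasurePreserving eqv3 := by
  have h1 : MeasurePreserving (MeasurableEquiv.funUnique (Fin 1) ℂ).symm :=
    (volume_preserving_funUnique (Fin 1) ℂ).symm _
  have h2 : MeasurePreserving (MeasurableEquiv.piFinSuccAbove (fun _ : Fin 2 => ℂ) 0).symm :=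
    (volume_preserving_piFinSuccAbove (fun _ : Fin 2 => ℂ) 0).symm _
  have h3 : MeasurePreserving (MeasurableEquiv.piFinSuccAbove (fun _ : Fin 3 => ℂ) 0).symm :=
    (volume_preserving_piFinSuccAbove (fun _ : Fin 3 => ℂ) 0).symm _
  have hid : MeasurePreserving (MeasurableEquiv.refl ℂ) := MeasurePreserving.id _
  have hinner : MeasurePreserving
      (((MeasurableEquiv.refl ℂ).prodCongr (MeasurableEquiv.funUnique (Fin 1) ℂ).symm).trans
        (MeasurableEquiv.piFinSuccAbove (fun _ : Fin 2 => ℂ) 0).symm) :=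
    h2.comp (hid.prod h1)
  exact h3.comp (hid.prod hinner)

lemma eqv3_eval (q : ℂ × ℂ × ℂ) :
    eqv3 q 0 = q.1 ∧ eqv3 q 1 = q.2.1 ∧ eqv3 q 2 = q.2.2 := by
  refine ⟨rfl, rfl, rfl⟩


/-- Squared norms of monomials in the Bergman space of
`Ω = {z ∈ ℂ³ : |z₁| ≤ 1, |z₃| ≤ 1, |z₂|² ≤ (1−|z₁|²)(1−|z₃|²)}`:
`∫_Ω |z₁|^{2n}|z₂|^{2m}|z₃|^{2p} dV = π³ β(n+1, m+2) β(p+1, m+2)/(m+1)`,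
where `β(a+1, b+1) = a! b!/(a+b+1)!`. -/
theorem stmt16 (n m p : ℕ) :
    ∫ z in {z : Fin 3 → ℂ | ‖z 0‖ ≤ 1 ∧ ‖z 2‖ ≤ 1 ∧
        ‖z 1‖ ^ 2 ≤ (1 - ‖z 0‖ ^ 2) * (1 - ‖z 2‖ ^ 2)},
      ‖z 0‖ ^ (2 * n) * ‖z 1‖ ^ (2 * m) * ‖z 2‖ ^ (2 * p)
      = Real.pi ^ 3
          * ((n.factorial : ℝ) * ((m + 1).factorial : ℝ) / ((n + m + 2).factorial : ℝ))
          * ((p.factorial : ℝ) * ((m + 1).factorial : ℝ) / ((p + m + 2).factorial : ℝ))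
          / (m + 1) := by
  have hS : MeasurableSet {z : Fin 3 → ℂ | ‖z 0‖ ≤ 1 ∧ ‖z 2‖ ≤ 1 ∧
      ‖z 1‖ ^ 2 ≤ (1 - ‖z 0‖ ^ 2) * (1 - ‖z 2‖ ^ 2)} := by
    simp only [Set.setOf_and]
    exact (measurableSet_le (by fun_prop) (by fun_prop)).inter
      ((measurableSet_le (by fun_prop) (by fun_prop)).inter
        (measurableSet_le (by fun_prop) (by fun_prop)))
  rw [← MeasureTheory.integral_indicator hS,
    ← eqv3_pres.integral_comp eqv3.measurableEmbedding]
  have hfun : ∀ q : ℂ × ℂ × ℂ,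
      Set.indicator {z : Fin 3 → ℂ | ‖z 0‖ ≤ 1 ∧ ‖z 2‖ ≤ 1 ∧
        ‖z 1‖ ^ 2 ≤ (1 - ‖z 0‖ ^ 2) * (1 - ‖z 2‖ ^ 2)}
        (fun z => ‖z 0‖ ^ (2 * n) * ‖z 1‖ ^ (2 * m) * ‖z 2‖ ^ (2 * p)) (eqv3 q)
      = Gf n m p q := by
    intro q
    obtain ⟨h0, h1, h2⟩ := eqv3_eval q
    rw [Set.indicator_apply]
    simp only [Set.mem_setOf_eq, h0, h1, h2]
    rfl
  simp_rw [hfun]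
  exact G_total n m p
end
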